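/- For every propositional formula φ, φ is a classical tautology if and only if φ is CL-valid (Proponent has a CL-winning strategy for φ), where CL is the ruleset E with rules D11 and D12 removed. -/

import Mathlib

/- Formalization of Lorenzen dialogue games, following Felscher's presentation.

   Propositional formulas are built from atoms using ¬, ∧, ∨, →.  A dialogue
   for a formula φ is a sequence of moves beginning with Proponent (P)
   asserting φ at position 0, with O moving at odd positions and P at even
   positions.  Each later move attacks or defends an earlier move of the other
   player, according to the particle rules.  Structural rules (D10, D11, D12,
   D13, E, and the variants D10*, D10′) constrain dialogues further.  P wins
   if P made the last move and no moves are available to O; φ is S-valid if P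
   has an S-winning strategy for φ. -/

namespace LorenzenDialogues

/-- Propositional formulas: atoms, ¬, ∧, ∨, →. -/
inductive Formula : Type
  | atom : ℕ → Formula
  | neg  : Formula → Formula
  | and  : Formula → Formula → Formula
  | or   : Formula → Formula → Formula
  | imp  : Formula → Formula → Formula
deriving DecidableEq

/-- Statements: formulas together with the symbolic attacks `?`, `∧_L`, `∧_R`. -/
inductive Statement : Type
  | form  : Formula → Statement
  | qmark : Statement
  | andL  : Statement
  | andR  : Statement
deriving DecidableEq

/-- Particle rules, attack part: which statements attack which formulas. -/
inductive Attacks : Statement → Formula → Prop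
  | andL (a b : Formula) : Attacks .andL (.and a b)
  | andR (a b : Formula) : Attacks .andR (.and a b)
  | qmark (a b : Formula) : Attacks .qmark (.or a b)
  | imp (a b : Formula) : Attacks (.form a) (.imp a b)
  | neg (a : Formula) : Attacks (.form a) (.neg a)

/-- Particle rules, defense part: `Defends χ a s` means `s` is a permitted
    defense of the formula `χ` against the attack `a`.  (A negation admits
    no defense.) -/
inductive Defends : Formula → Statement → Statement → Prop
  | andL (a b : Formula) : Defends (.and a b) .andL (.form a)
  | andR (a b : Formula) : Defends (.and a b) .andR (.form b)
  | orL (a b : Formula) : Defends (.or a b) .qmark (.form a)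
  | orR (a b : Formula) : Defends (.or a b) .qmark (.form b)
  | imp (a b : Formula) : Defends (.imp a b) (.form a) (.form b)

/-- A move: a statement, a flag recording whether it is an attack (`true`)
    or a defense (`false`), and the position of the earlier move it attacks,
    resp. the earlier attack it defends against. -/
structure Move : Type where
  statement : Statement
  isAttack : Bool
  ref : ℕ
deriving DecidableEq

/-- A dialogue: the initial formula asserted by P at position 0, followed by
    the list of later moves (the move at list index `i` occupies position
    `i + 1`; O moves at odd positions, P at even positions). -/
structure Dialogue : Type where
  initial : Formula
  moves : List Move

/-- The statement asserted at position `n` (if any). -/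
def Dialogue.stmtAt (d : Dialogue) (n : ℕ) : Option Statement :=
  if n = 0 then some (.form d.initial) else (d.moves[n - 1]?).map Move.statement

/-- The move at position `n ≥ 1` (if any); position 0 is the initial assertion,
    not a move. -/
def Dialogue.moveAt (d : Dialogue) (n : ℕ) : Option Move :=
  if n = 0 then none else d.moves[n - 1]?

/-- The move `m`, played at position `n ≥ 1`, is permitted by the particle
    rules: it refers to an earlier position of the other player; if it is an
    attack, it attacks a formula asserted there, and if it is a defense, it
    responds to an attack played there, as the particle rules prescribe. -/
def MoveOK (d : Dialogue) (n : ℕ) (m : Move) : Prop :=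
  m.ref < n ∧ m.ref % 2 ≠ n % 2 ∧
    (m.isAttack = true →
      ∃ ψ, d.stmtAt m.ref = some (.form ψ) ∧ Attacks m.statement ψ) ∧
    (m.isAttack = false →
      ∃ a χ, d.moveAt m.ref = some a ∧ a.isAttack = true ∧
        d.stmtAt a.ref = some (.form χ) ∧ Defends χ a.statement m.statement)

/-- The dialogue adheres to the particle rules (every move is legal). -/
def ParticleOK (d : Dialogue) : Prop :=
  ∀ i m, d.moves[i]? = some m → MoveOK d (i + 1) m

/-- Position `n` carries a defense of the attack made at position `r`. -/
def IsDefenseOf (d : Dialogue) (n r : ℕ) : Prop :=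
  ∃ m, d.moveAt n = some m ∧ m.isAttack = false ∧ m.ref = r

/-- Position `n` carries an attack on the assertion made at position `r`. -/
def IsAttackOn (d : Dialogue) (n r : ℕ) : Prop :=
  ∃ m, d.moveAt n = some m ∧ m.isAttack = true ∧ m.ref = r

/-- Position `n` carries an attack. -/
def IsAttackPos (d : Dialogue) (n : ℕ) : Prop :=
  ∃ m, d.moveAt n = some m ∧ m.isAttack = true

/-- The attack at position `r` is still open (no defense against it has yet
    been played) before position `k`. -/
def OpenAt (d : Dialogue) (r k : ℕ) : Prop :=
  IsAttackPos d r ∧ ¬ ∃ j, j < k ∧ IsDefenseOf d j r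

/-- (D10) P may assert an atomic formula only after it has been asserted by O
    before. -/
def D10 (d : Dialogue) : Prop :=
  ∀ n p, n % 2 = 0 → d.stmtAt n = some (.form (.atom p)) →
    ∃ j, j < n ∧ j % 2 = 1 ∧ d.stmtAt j = some (.form (.atom p))

/-- (D10*) P may assert an atom `p` only if O has asserted `p` or `¬p`
    before. -/
def D10star (d : Dialogue) : Prop :=
  ∀ n p, n % 2 = 0 → d.stmtAt n = some (.form (.atom p)) →
    ∃ j, j < n ∧ j % 2 = 1 ∧
      (d.stmtAt j = some (.form (.atom p)) ∨
        d.stmtAt j = some (.form (.neg (.atom p))))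

/-- (D10′) P may assert an atom `p` only if O has asserted `p` or `¬¬p`
    before. -/
def D10prime (d : Dialogue) : Prop :=
  ∀ n p, n % 2 = 0 → d.stmtAt n = some (.form (.atom p)) →
    ∃ j, j < n ∧ j % 2 = 1 ∧
      (d.stmtAt j = some (.form (.atom p)) ∨
        d.stmtAt j = some (.form (.neg (.neg (.atom p)))))

/-- (D11) When defending, only the most recent open attack may be responded
    to: the attack defended against is open, and no strictly more recent open
    attack (against the same player) exists. -/
def D11 (d : Dialogue) : Prop :=
  ∀ n r, IsDefenseOf d n r →
    OpenAt d r n ∧ ¬ ∃ r', r < r' ∧ r' < n ∧ r' % 2 = r % 2 ∧ OpenAt d r' n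

/-- (D12) An attack may be answered at most once. -/
def D12 (d : Dialogue) : Prop :=
  ∀ n₁ n₂ r, IsDefenseOf d n₁ r → IsDefenseOf d n₂ r → n₁ = n₂

/-- (D13) A P-assertion (made at an even position) may be attacked at most
    once. -/
def D13 (d : Dialogue) : Prop :=
  ∀ n₁ n₂ r, r % 2 = 0 → IsAttackOn d n₁ r → IsAttackOn d n₂ r → n₁ = n₂

/-- (E) O can react only upon the immediately preceding P-statement. -/
def ERule (d : Dialogue) : Prop :=
  ∀ n m, n % 2 = 1 → d.moveAt n = some m → m.ref = n - 1

/-- A ruleset is a set of structural rules, i.e. a predicate on dialogues. -/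
def Ruleset := Dialogue → Prop

/-- Ruleset D = {D10, D11, D12, D13}. -/
def rulesetD : Ruleset := fun d => D10 d ∧ D11 d ∧ D12 d ∧ D13 d

/-- Ruleset E = D ∪ {E}. -/
def rulesetE : Ruleset := fun d => rulesetD d ∧ ERule d

/-- Ruleset CL = E − {D11, D12} = {D10, D13, E}. -/
def rulesetCL : Ruleset := fun d => D10 d ∧ D13 d ∧ ERule d

/-- Ruleset N = D − {D11, D12} = {D10, D13}. -/
def rulesetN : Ruleset := fun d => D10 d ∧ D13 d

/-- Ruleset E* = {D10*, D11, D12, D13, E}. -/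
def rulesetEstar : Ruleset :=
  fun d => D10star d ∧ D11 d ∧ D12 d ∧ D13 d ∧ ERule d

/-- Ruleset E′ = {D10′, D11, D12, D13, E}. -/
def rulesetEprime : Ruleset :=
  fun d => D10prime d ∧ D11 d ∧ D12 d ∧ D13 d ∧ ERule d

/-- An S-dialogue: a dialogue adhering to the particle rules and to the
    structural rules S. -/
def Legal (S : Ruleset) (d : Dialogue) : Prop := ParticleOK d ∧ S d

/-- Extend a dialogue by one move. -/
def Dialogue.extend (d : Dialogue) (m : Move) : Dialogue :=
  ⟨d.initial, d.moves ++ [m]⟩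

/-- The position about to be played. -/
def nextPos (d : Dialogue) : ℕ := d.moves.length + 1

/-- It is P's turn (the next position is even). -/
def PTurn (d : Dialogue) : Prop := nextPos d % 2 = 0

/-- The move `m` legally extends the S-dialogue `d`. -/
def LegalExt (S : Ruleset) (d : Dialogue) (m : Move) : Prop :=
  Legal S (d.extend m)

/-- `PWinningC S C d` holds when P, moving under the additional constraint
    `C` on P's own choices, has a winning strategy in the S-dialogue game
    continuing the dialogue `d`: at P's turn, P has a legal move (satisfying
    `C`) after which P is still winning; at O's turn, every legal O-move
    leads to a position where P is winning (in particular, if no O-move is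
    available, P has won: P made the last move and O cannot move). -/
inductive PWinningC (S : Ruleset) (C : Dialogue → Move → Prop) : Dialogue → Prop
  | pMove (d : Dialogue) (m : Move) (hturn : PTurn d)
      (hm : LegalExt S d m) (hC : C d m)
      (h : PWinningC S C (d.extend m)) : PWinningC S C d
  | oMoves (d : Dialogue) (hturn : ¬ PTurn d)
      (h : ∀ m, LegalExt S d m → PWinningC S C (d.extend m)) :
      PWinningC S C d

/-- P has a winning strategy continuing the S-dialogue `d`. -/
def PWinning (S : Ruleset) (d : Dialogue) : Prop :=
  PWinningC S (fun _ _ => True) d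

/-- `valid S φ` (written `⊨_S φ`): the opening assertion of φ is itself a
    legal S-dialogue and P has an S-winning strategy for φ. -/
def valid (S : Ruleset) (φ : Formula) : Prop :=
  Legal S ⟨φ, []⟩ ∧ PWinning S ⟨φ, []⟩

/-- Derivability in intuitionistic propositional logic (a Hilbert-style
    axiomatization with modus ponens). -/
inductive IProv : Formula → Prop
  | k (a b : Formula) : IProv (.imp a (.imp b a))
  | s (a b c : Formula) :
      IProv (.imp (.imp a (.imp b c)) (.imp (.imp a b) (.imp a c)))
  | andE1 (a b : Formula) : IProv (.imp (.and a b) a)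
  | andE2 (a b : Formula) : IProv (.imp (.and a b) b)
  | andI (a b : Formula) : IProv (.imp a (.imp b (.and a b)))
  | orI1 (a b : Formula) : IProv (.imp a (.or a b))
  | orI2 (a b : Formula) : IProv (.imp b (.or a b))
  | orE (a b c : Formula) :
      IProv (.imp (.imp a c) (.imp (.imp b c) (.imp (.or a b) c)))
  | negI (a b : Formula) :
      IProv (.imp (.imp a b) (.imp (.imp a (.neg b)) (.neg a)))
  | negE (a b : Formula) : IProv (.imp (.neg a) (.imp a b))
  | mp (a b : Formula) : IProv (.imp a b) → IProv a → IProv b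

/-- The stability principle ¬¬p → p for the atom `p`. -/
def stab (p : ℕ) : Formula := .imp (.neg (.neg (.atom p))) (.atom p)

/-- Stable logic: intuitionistic propositional logic plus all instances of
    the stability scheme ¬¬p → p for atoms p, closed under modus ponens. -/
inductive StableProv : Formula → Prop
  | intuit (a : Formula) : IProv a → StableProv a
  | stab (p : ℕ) : StableProv (stab p)
  | mp (a b : Formula) : StableProv (.imp a b) → StableProv a → StableProv b

/-- Boolean evaluation of a formula under a valuation of its atoms. -/
def Formula.eval (v : ℕ → Bool) : Formula → Bool
  | .atom p => v p
  | .neg a => !(a.eval v)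
  | .and a b => a.eval v && b.eval v
  | .or a b => a.eval v || b.eval v
  | .imp a b => !(a.eval v) || b.eval v

/-- A classical tautology: true under every Boolean valuation. -/
def Tautology (φ : Formula) : Prop := ∀ v, φ.eval v = true

/-- Uniform substitution of formulas for atoms, applied homomorphically. -/
def Formula.subst (σ : ℕ → Formula) : Formula → Formula
  | .atom p => σ p
  | .neg a => .neg (a.subst σ)
  | .and a b => .and (a.subst σ) (b.subst σ)
  | .or a b => .or (a.subst σ) (b.subst σ)
  | .imp a b => .imp (a.subst σ) (b.subst σ)

/-- The atoms occurring in a formula. -/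
def Formula.atoms : Formula → List ℕ
  | .atom p => [p]
  | .neg a => a.atoms
  | .and a b => a.atoms ++ b.atoms
  | .or a b => a.atoms ++ b.atoms
  | .imp a b => a.atoms ++ b.atoms

/-- Conjunction of a nonempty list of formulas. -/
def conjList (f : Formula) : List Formula → Formula
  | [] => f
  | g :: gs => .and f (conjList g gs)

/-- The conjunction (¬¬p → p) ∧ … of stability instances for the atoms
    `p :: ps`. -/
def stabConj (p : ℕ) (ps : List ℕ) : Formula :=
  conjList (stab p) (ps.map stab)


namespace CLProof

open Formula

/-! ### Indexing lemmas -/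

@[simp] lemma extend_moves (d : Dialogue) (m : Move) : (d.extend m).moves = d.moves ++ [m] := rfl

@[simp] lemma extend_initial (d : Dialogue) (m : Move) : (d.extend m).initial = d.initial := rfl

@[simp] lemma extend_length (d : Dialogue) (m : Move) :
    (d.extend m).moves.length = d.moves.length + 1 := by simp

lemma stmtAt_le_of_some {d : Dialogue} {n : ℕ} {s : Statement}
    (h : d.stmtAt n = some s) : n ≤ d.moves.length := by
  rcases Nat.eq_zero_or_pos n with h0 | h0
  · omega
  · unfold Dialogue.stmtAt at h
    rw [if_neg (by omega)] at h
    rcases Option.map_eq_some_iff.1 h with ⟨mv, hmv, -⟩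
    obtain ⟨hlt, -⟩ := List.getElem?_eq_some_iff.1 hmv
    omega

lemma moveAt_bounds {d : Dialogue} {n : ℕ} {mv : Move}
    (h : d.moveAt n = some mv) : 1 ≤ n ∧ n ≤ d.moves.length := by
  unfold Dialogue.moveAt at h
  by_cases h0 : n = 0
  · simp [h0] at h
  · rw [if_neg h0] at h
    obtain ⟨hlt, -⟩ := List.getElem?_eq_some_iff.1 h
    omega

lemma stmtAt_extend_of_le {d : Dialogue} {m : Move} {n : ℕ}
    (h : n ≤ d.moves.length) : (d.extend m).stmtAt n = d.stmtAt n := by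
  unfold Dialogue.stmtAt
  by_cases h0 : n = 0
  · simp [h0]
  · rw [if_neg h0, if_neg h0]
    simp only [extend_moves]
    rw [List.getElem?_append_left (by omega)]

lemma stmtAt_extend_top (d : Dialogue) (m : Move) :
    (d.extend m).stmtAt (d.moves.length + 1) = some m.statement := by
  unfold Dialogue.stmtAt
  rw [if_neg (by omega)]
  simp

lemma moveAt_extend_of_le {d : Dialogue} {m : Move} {n : ℕ}
    (h : n ≤ d.moves.length) : (d.extend m).moveAt n = d.moveAt n := by
  unfold Dialogue.moveAt
  by_cases h0 : n = 0
  · simp [h0]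
  · rw [if_neg h0, if_neg h0]
    simp only [extend_moves]
    rw [List.getElem?_append_left (by omega)]

lemma moveAt_extend_top (d : Dialogue) (m : Move) :
    (d.extend m).moveAt (d.moves.length + 1) = some m := by
  unfold Dialogue.moveAt
  rw [if_neg (by omega)]
  simp

lemma stmtAt_extend_some {d : Dialogue} {m : Move} {n : ℕ} {s : Statement}
    (h : d.stmtAt n = some s) : (d.extend m).stmtAt n = some s := by
  rw [stmtAt_extend_of_le (stmtAt_le_of_some h)]; exact h

lemma moveAt_extend_some {d : Dialogue} {m : Move} {n : ℕ} {mv : Move}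
    (h : d.moveAt n = some mv) : (d.extend m).moveAt n = some mv := by
  rw [moveAt_extend_of_le (moveAt_bounds h).2]; exact h

lemma moveAt_mem {d : Dialogue} {n : ℕ} {mv : Move}
    (h : d.moveAt n = some mv) : d.moves[n-1]? = some mv := by
  unfold Dialogue.moveAt at h
  by_cases h0 : n = 0
  · simp [h0] at h
  · rwa [if_neg h0] at h

/-- A move recorded in a particle-correct dialogue satisfies `MoveOK`. -/
lemma particle_moveAt {d : Dialogue} (hp : ParticleOK d) {n : ℕ} {mv : Move}
    (h : d.moveAt n = some mv) : MoveOK d n mv := by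
  have hb := moveAt_bounds h
  have := hp (n-1) mv (moveAt_mem h)
  have hn : n - 1 + 1 = n := by omega
  rwa [hn] at this

end CLProof
namespace CLProof

/-! ### Transfer of legality along extension -/

lemma MoveOK_extend {d : Dialogue} {m m' : Move} {n : ℕ}
    (h : MoveOK d n m') : MoveOK (d.extend m) n m' := by
  obtain ⟨h1, h2, h3, h4⟩ := h
  refine ⟨h1, h2, ?_, ?_⟩
  · intro ha; obtain ⟨ψ, hψ, hatt⟩ := h3 ha
    exact ⟨ψ, stmtAt_extend_some hψ, hatt⟩
  · intro ha; obtain ⟨a, χ, hma, hia, hχ, hdef⟩ := h4 ha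
    exact ⟨a, χ, moveAt_extend_some hma, hia, stmtAt_extend_some hχ, hdef⟩

lemma MoveOK_of_extend {d : Dialogue} {m m' : Move} {n : ℕ}
    (hp : ParticleOK d) (hn : n ≤ d.moves.length + 1)
    (h : MoveOK (d.extend m) n m') : MoveOK d n m' := by
  obtain ⟨h1, h2, h3, h4⟩ := h
  refine ⟨h1, h2, ?_, ?_⟩
  · intro ha; obtain ⟨ψ, hψ, hatt⟩ := h3 ha
    refine ⟨ψ, ?_, hatt⟩
    rwa [stmtAt_extend_of_le (by omega)] at hψ
  · intro ha; obtain ⟨a, χ, hma, hia, hχ, hdef⟩ := h4 ha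
    have hrle : m'.ref ≤ d.moves.length := by omega
    rw [moveAt_extend_of_le hrle] at hma
    have haok := particle_moveAt hp hma
    have : a.ref < m'.ref := haok.1
    rw [stmtAt_extend_of_le (by omega)] at hχ
    exact ⟨a, χ, hma, hia, hχ, hdef⟩

lemma particleOK_extend {d : Dialogue} {m : Move}
    (hp : ParticleOK d) (h : MoveOK d (d.moves.length + 1) m) :
    ParticleOK (d.extend m) := by
  intro i mi hmi
  simp only [extend_moves] at hmi
  rcases Nat.lt_or_ge i d.moves.length with hi | hi
  · rw [List.getElem?_append_left hi] at hmi
    exact MoveOK_extend (hp i mi hmi)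
  · have hlen : (d.moves ++ [m]).length = d.moves.length + 1 := by simp
    obtain ⟨hlt, heq⟩ := List.getElem?_eq_some_iff.1 hmi
    have hieq : i = d.moves.length := by simp at hlt; omega
    subst hieq
    have : mi = m := by
      rw [List.getElem_append_right (by omega)] at heq
      simpa using heq.symm
    subst this
    exact MoveOK_extend h

lemma moveOK_of_extend_top {d : Dialogue} {m : Move}
    (h : ParticleOK (d.extend m)) : MoveOK (d.extend m) (d.moves.length + 1) m := by
  refine h d.moves.length m ?_
  simp

lemma D10_extend {d : Dialogue} {m : Move} (h10 : D10 d)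
    (hm : (d.moves.length + 1) % 2 = 0 → ∀ q, m.statement = .form (.atom q) →
      ∃ j, j % 2 = 1 ∧ d.stmtAt j = some (.form (.atom q))) :
    D10 (d.extend m) := by
  intro n p hn hs
  have hle : n ≤ d.moves.length + 1 := by
    have := stmtAt_le_of_some hs; simpa using this
  rcases Nat.lt_or_ge n (d.moves.length + 1) with hlt | hge
  · rw [stmtAt_extend_of_le (by omega)] at hs
    obtain ⟨j, hj1, hj2, hj3⟩ := h10 n p hn hs
    exact ⟨j, hj1, hj2, stmtAt_extend_some hj3⟩
  · have hn' : n = d.moves.length + 1 := by omega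
    subst hn'
    rw [stmtAt_extend_top] at hs
    obtain ⟨j, hj2, hj3⟩ := hm hn p (by injection hs)
    have := stmtAt_le_of_some hj3
    exact ⟨j, by omega, hj2, stmtAt_extend_some hj3⟩

lemma isAttackOn_extend_elim {d : Dialogue} {m : Move} {n r : ℕ}
    (h : IsAttackOn (d.extend m) n r) :
    IsAttackOn d n r ∨ (n = d.moves.length + 1 ∧ m.isAttack = true ∧ m.ref = r) := by
  obtain ⟨mv, hmv, hia, href⟩ := h
  have hb := moveAt_bounds hmv
  simp only [extend_length] at hb
  rcases Nat.lt_or_ge n (d.moves.length + 1) with hlt | hge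
  · rw [moveAt_extend_of_le (by omega)] at hmv
    exact Or.inl ⟨mv, hmv, hia, href⟩
  · have hn' : n = d.moves.length + 1 := by omega
    subst hn'
    rw [moveAt_extend_top] at hmv
    cases hmv
    exact Or.inr ⟨rfl, hia, href⟩

lemma isAttackOn_extend {d : Dialogue} {m : Move} {n r : ℕ}
    (h : IsAttackOn d n r) : IsAttackOn (d.extend m) n r := by
  obtain ⟨mv, hmv, hia, href⟩ := h
  exact ⟨mv, moveAt_extend_some hmv, hia, href⟩

lemma D13_extend_of_not {d : Dialogue} {m : Move} (h : D13 d)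
    (hm : m.isAttack = false) : D13 (d.extend m) := by
  intro n1 n2 r hr h1 h2
  rcases isAttackOn_extend_elim h1 with h1 | ⟨-, hia, -⟩
  · rcases isAttackOn_extend_elim h2 with h2 | ⟨-, hia, -⟩
    · exact h n1 n2 r hr h1 h2
    · rw [hm] at hia; cases hia
  · rw [hm] at hia; cases hia

lemma D13_extend_of_odd {d : Dialogue} {m : Move} (h : D13 d)
    (hm : m.isAttack = true → m.ref % 2 = 1) : D13 (d.extend m) := by
  intro n1 n2 r hr h1 h2
  rcases isAttackOn_extend_elim h1 with h1 | ⟨-, hia, href⟩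
  · rcases isAttackOn_extend_elim h2 with h2 | ⟨-, hia, href⟩
    · exact h n1 n2 r hr h1 h2
    · subst href; rw [hm hia] at hr; cases hr
  · subst href; rw [hm hia] at hr; cases hr

lemma D13_extend_top {d : Dialogue} {m : Move} (hp : ParticleOK d) (h : D13 d)
    (hm : m.ref = d.moves.length) : D13 (d.extend m) := by
  have key : ∀ n, IsAttackOn d n d.moves.length → False := by
    intro n hn
    obtain ⟨mv, hmv, -, href⟩ := hn
    have hb := moveAt_bounds hmv
    have := (particle_moveAt hp hmv).1
    omega
  intro n1 n2 r hr h1 h2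
  rcases isAttackOn_extend_elim h1 with h1 | ⟨he1, -, href1⟩
  · rcases isAttackOn_extend_elim h2 with h2 | ⟨he2, -, href2⟩
    · exact h n1 n2 r hr h1 h2
    · exfalso; rw [← href2, hm] at h1; exact key n1 h1
  · rcases isAttackOn_extend_elim h2 with h2 | ⟨he2, -, href2⟩
    · exfalso; rw [← href1, hm] at h2; exact key n2 h2
    · rw [he1, he2]

lemma ERule_extend {d : Dialogue} {m : Move} (h : ERule d)
    (hm : (d.moves.length + 1) % 2 = 1 → m.ref = d.moves.length) :
    ERule (d.extend m) := by
  intro n mv hn hmv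
  have hb := moveAt_bounds hmv
  simp only [extend_length] at hb
  rcases Nat.lt_or_ge n (d.moves.length + 1) with hlt | hge
  · rw [moveAt_extend_of_le (by omega)] at hmv
    exact h n mv hn hmv
  · have hn' : n = d.moves.length + 1 := by omega
    subst hn'
    rw [moveAt_extend_top] at hmv
    cases hmv
    rw [hm hn]; omega

/-- Packaged legality of a P-move extension under CL. -/
lemma legal_extend_P {d : Dialogue} {m : Move}
    (hL : Legal rulesetCL d) (hT : PTurn d)
    (hOK : MoveOK d (d.moves.length + 1) m)
    (h10 : ∀ q, m.statement = .form (.atom q) →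
      ∃ j, j % 2 = 1 ∧ d.stmtAt j = some (.form (.atom q)))
    (h13 : m.isAttack = true → m.ref % 2 = 1) :
    Legal rulesetCL (d.extend m) := by
  obtain ⟨hp, hd10, hd13, he⟩ := hL
  refine ⟨particleOK_extend hp hOK, D10_extend hd10 (fun _ => h10), D13_extend_of_odd hd13 h13, ERule_extend he ?_⟩
  intro hodd
  exfalso
  unfold PTurn nextPos at hT
  omega

/-- Packaged legality of an O-move extension under CL (reacting to the
    immediately preceding statement, per rule E). -/
lemma legal_extend_O {d : Dialogue} {m : Move}
    (hL : Legal rulesetCL d) (hT : ¬ PTurn d)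
    (hOK : MoveOK d (d.moves.length + 1) m)
    (hr : m.ref = d.moves.length) :
    Legal rulesetCL (d.extend m) := by
  obtain ⟨hp, hd10, hd13, he⟩ := hL
  have hodd : (d.moves.length + 1) % 2 = 1 := by
    unfold PTurn nextPos at hT; omega
  refine ⟨particleOK_extend hp hOK, D10_extend hd10 ?_, D13_extend_top hp hd13 hr, ERule_extend he (fun _ => hr)⟩
  intro h0; omega

end CLProof
namespace CLProof

/-! ### An abstract calculus for P-winning strategies -/

def fsize : Formula → ℕ
  | .atom _ => 1
  | .neg a => fsize a + 1
  | .and a b => fsize a + fsize b + 1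
  | .or a b => fsize a + fsize b + 1
  | .imp a b => fsize a + fsize b + 1

def weight (L : List Formula) : ℕ := (L.map fsize).sum

@[simp] lemma weight_nil : weight [] = 0 := rfl

@[simp] lemma weight_cons (a : Formula) (L : List Formula) :
    weight (a :: L) = fsize a + weight L := by simp [weight]

lemma weight_erase {a : Formula} {L : List Formula} (h : a ∈ L) :
    weight L = fsize a + weight (L.erase a) := by
  have hp : L.Perm (a :: L.erase a) := List.perm_cons_erase h
  have : (L.map fsize).Perm ((a :: L.erase a).map fsize) := hp.map fsize
  have := this.sum_eq
  simpa [weight] using this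

/-- Semantic validity of the sequent Γ ⟹ Δ. -/
def Holds (Γ Δ : List Formula) : Prop :=
  ∀ v : ℕ → Bool, (∀ γ ∈ Γ, γ.eval v = true) → ∃ δ ∈ Δ, δ.eval v = true

inductive Win : List Formula → List Formula → Prop
  | weaken {Γ Γ' Δ Δ' : List Formula} :
      Win Γ Δ → Γ ⊆ Γ' → Δ ⊆ Δ' → Win Γ' Δ'
  | dAtom {Γ Δ : List Formula} {q : ℕ} :
      Formula.atom q ∈ Δ → Formula.atom q ∈ Γ → Win Γ Δ
  | dNeg {Γ Δ : List Formula} {a : Formula} :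
      Formula.neg a ∈ Δ → Win (a :: Γ) Δ → Win Γ Δ
  | dAnd {Γ Δ : List Formula} {a b : Formula} :
      Formula.and a b ∈ Δ → Win Γ (a :: Δ) → Win Γ (b :: Δ) → Win Γ Δ
  | dOr {Γ Δ : List Formula} {a b : Formula} :
      Formula.or a b ∈ Δ → Win Γ (a :: b :: Δ) → Win Γ Δ
  | dImp {Γ Δ : List Formula} {a b : Formula} :
      Formula.imp a b ∈ Δ → Win (a :: Γ) (b :: Δ) → Win Γ Δ
  | aAndL {Γ Δ : List Formula} {a b : Formula} :
      Formula.and a b ∈ Γ → Win (a :: Γ) Δ → Win Γ Δ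
  | aAndR {Γ Δ : List Formula} {a b : Formula} :
      Formula.and a b ∈ Γ → Win (b :: Γ) Δ → Win Γ Δ
  | aOr {Γ Δ : List Formula} {a b : Formula} :
      Formula.or a b ∈ Γ → Win (a :: Γ) Δ → Win (b :: Γ) Δ → Win Γ Δ
  | aNegAtom {Γ Δ : List Formula} {q : ℕ} :
      Formula.neg (.atom q) ∈ Γ → Formula.atom q ∈ Γ → Win Γ Δ
  | aNegNeg {Γ Δ : List Formula} {a : Formula} :
      Formula.neg (.neg a) ∈ Γ → Win (a :: Γ) Δ → Win Γ Δ
  | aNegAnd {Γ Δ : List Formula} {a b : Formula} :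
      Formula.neg (.and a b) ∈ Γ → Win Γ (a :: Δ) → Win Γ (b :: Δ) → Win Γ Δ
  | aNegOr {Γ Δ : List Formula} {a b : Formula} :
      Formula.neg (.or a b) ∈ Γ → Win Γ (a :: b :: Δ) → Win Γ Δ
  | aNegImp {Γ Δ : List Formula} {a b : Formula} :
      Formula.neg (.imp a b) ∈ Γ → Win (a :: Γ) (b :: Δ) → Win Γ Δ
  | aImpAtom {Γ Δ : List Formula} {q : ℕ} {b : Formula} :
      Formula.imp (.atom q) b ∈ Γ → Formula.atom q ∈ Γ → Win (b :: Γ) Δ → Win Γ Δ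
  | aImpNeg {Γ Δ : List Formula} {a b : Formula} :
      Formula.imp (.neg a) b ∈ Γ → Win (a :: Γ) Δ → Win (b :: Γ) Δ → Win Γ Δ
  | aImpAnd {Γ Δ : List Formula} {a₁ a₂ b : Formula} :
      Formula.imp (.and a₁ a₂) b ∈ Γ → Win Γ (a₁ :: Δ) → Win Γ (a₂ :: Δ) →
      Win (b :: Γ) Δ → Win Γ Δ
  | aImpOr {Γ Δ : List Formula} {a₁ a₂ b : Formula} :
      Formula.imp (.or a₁ a₂) b ∈ Γ → Win Γ (a₁ :: a₂ :: Δ) → Win (b :: Γ) Δ → Win Γ Δ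
  | aImpImp {Γ Δ : List Formula} {a₁ a₂ b : Formula} :
      Formula.imp (.imp a₁ a₂) b ∈ Γ → Win (a₁ :: Γ) (a₂ :: Δ) → Win (b :: Γ) Δ → Win Γ Δ

end CLProof
namespace CLProof

lemma fsize_pos (a : Formula) : 0 < fsize a := by
  cases a <;> simp [fsize]

lemma eraseSub (g : Formula) (L : List Formula) : L.erase g ⊆ L :=
  fun _ hx => List.mem_of_mem_erase hx

lemma consSub {L L' : List Formula} (a : Formula) (h : L ⊆ L') : a :: L ⊆ a :: L' := by
  intro x hx
  rcases List.mem_cons.1 hx with h1 | h2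
  · exact h1 ▸ List.mem_cons_self
  · exact List.mem_cons_of_mem _ (h h2)

lemma subRefl (L : List Formula) : L ⊆ L := fun _ hx => hx

lemma all_of_erase {Γ : List Formula} {g : Formula} (hg : g ∈ Γ) {v : ℕ → Bool}
    (hgt : g.eval v = true) (hv : ∀ γ ∈ Γ.erase g, γ.eval v = true) :
    ∀ γ ∈ Γ, γ.eval v = true := by
  intro γ hγ
  by_cases hne : γ = g
  · subst hne; exact hgt
  · exact hv γ ((List.mem_erase_of_ne hne).2 hγ)

lemma eval_false {v : ℕ → Bool} {a : Formula} (h : ¬ a.eval v = true) :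
    a.eval v = false := by
  revert h; cases a.eval v <;> simp

end CLProof
namespace CLProof

theorem complete : ∀ (n : ℕ) (Γ Δ : List Formula),
    weight Γ + weight Δ ≤ n → Holds Γ Δ → Win Γ Δ := by
  intro n
  induction n using Nat.strong_induction_on with
  | _ n ih =>
  intro Γ Δ hw hH
  by_cases hAt : ∃ q, Formula.atom q ∈ Δ ∧ Formula.atom q ∈ Γ
  · obtain ⟨q, h1, h2⟩ := hAt; exact Win.dAtom h1 h2
  by_cases hNA : ∃ q, Formula.neg (.atom q) ∈ Γ ∧ Formula.atom q ∈ Γ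
  · obtain ⟨q, h1, h2⟩ := hNA; exact Win.aNegAtom h1 h2
  -- right ∧
  by_cases hDand : ∃ a b, Formula.and a b ∈ Δ
  · obtain ⟨a, b, hg⟩ := hDand
    have hE := weight_erase hg
    refine Win.dAnd hg ?_ ?_
    · refine Win.weaken
        (ih (n-1) (by simp only [fsize] at hE; omega) Γ (a :: Δ.erase (Formula.and a b))
          (by simp only [fsize, weight_cons] at hE ⊢; omega) ?_)
        (subRefl _) (consSub _ (eraseSub _ _))
      intro v hΓ
      obtain ⟨δ, hδ, ht⟩ := hH v hΓ
      by_cases hne : δ = Formula.and a b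
      · subst hne; simp [Formula.eval] at ht
        exact ⟨a, List.mem_cons_self, ht.1⟩
      · exact ⟨δ, List.mem_cons_of_mem _ ((List.mem_erase_of_ne hne).2 hδ), ht⟩
    · refine Win.weaken
        (ih (n-1) (by simp only [fsize] at hE; omega) Γ (b :: Δ.erase (Formula.and a b))
          (by simp only [fsize, weight_cons] at hE ⊢; omega) ?_)
        (subRefl _) (consSub _ (eraseSub _ _))
      intro v hΓ
      obtain ⟨δ, hδ, ht⟩ := hH v hΓ
      by_cases hne : δ = Formula.and a b
      · subst hne; simp [Formula.eval] at ht
        exact ⟨b, List.mem_cons_self, ht.2⟩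
      · exact ⟨δ, List.mem_cons_of_mem _ ((List.mem_erase_of_ne hne).2 hδ), ht⟩
  -- right ∨
  by_cases hDor : ∃ a b, Formula.or a b ∈ Δ
  · obtain ⟨a, b, hg⟩ := hDor
    have hE := weight_erase hg
    refine Win.dOr hg
      (Win.weaken
        (ih (n-1) (by simp only [fsize] at hE; omega) Γ (a :: b :: Δ.erase (Formula.or a b))
          (by simp only [fsize, weight_cons] at hE ⊢; omega) ?_)
        (subRefl _) (consSub _ (consSub _ (eraseSub _ _))))
    intro v hΓ
    obtain ⟨δ, hδ, ht⟩ := hH v hΓ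
    by_cases hne : δ = Formula.or a b
    · subst hne; simp [Formula.eval] at ht
      rcases ht with ht | ht
      · exact ⟨a, List.mem_cons_self, ht⟩
      · exact ⟨b, List.mem_cons_of_mem _ (List.mem_cons_self), ht⟩
    · exact ⟨δ, List.mem_cons_of_mem _ (List.mem_cons_of_mem _
        ((List.mem_erase_of_ne hne).2 hδ)), ht⟩
  -- right →
  by_cases hDimp : ∃ a b, Formula.imp a b ∈ Δ
  · obtain ⟨a, b, hg⟩ := hDimp
    have hE := weight_erase hg
    refine Win.dImp hg
      (Win.weaken
        (ih (n-1) (by simp only [fsize] at hE; omega) (a :: Γ) (b :: Δ.erase (Formula.imp a b))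
          (by simp only [fsize, weight_cons] at hE ⊢; omega) ?_)
        (subRefl _) (consSub _ (eraseSub _ _)))
    intro v hΓ
    have ha : a.eval v = true := hΓ a (List.mem_cons_self)
    obtain ⟨δ, hδ, ht⟩ := hH v (fun γ hγ => hΓ γ (List.mem_cons_of_mem _ hγ))
    by_cases hne : δ = Formula.imp a b
    · subst hne; simp [Formula.eval, ha] at ht
      exact ⟨b, List.mem_cons_self, ht⟩
    · exact ⟨δ, List.mem_cons_of_mem _ ((List.mem_erase_of_ne hne).2 hδ), ht⟩
  -- right ¬
  by_cases hDneg : ∃ a, Formula.neg a ∈ Δ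
  · obtain ⟨a, hg⟩ := hDneg
    have hE := weight_erase hg
    refine Win.dNeg hg
      (Win.weaken
        (ih (n-1) (by simp only [fsize] at hE; omega) (a :: Γ) (Δ.erase (Formula.neg a))
          (by simp only [fsize, weight_cons] at hE ⊢; omega) ?_)
        (subRefl _) (eraseSub _ _))
    intro v hΓ
    have ha : a.eval v = true := hΓ a (List.mem_cons_self)
    obtain ⟨δ, hδ, ht⟩ := hH v (fun γ hγ => hΓ γ (List.mem_cons_of_mem _ hγ))
    have hne : δ ≠ Formula.neg a := by
      rintro rfl; simp [Formula.eval, ha] at ht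
    exact ⟨δ, (List.mem_erase_of_ne hne).2 hδ, ht⟩
  -- left ∧
  by_cases hGand : ∃ a b, Formula.and a b ∈ Γ
  · obtain ⟨a, b, hg⟩ := hGand
    have hE := weight_erase hg
    refine Win.aAndL hg (Win.aAndR (List.mem_cons_of_mem _ hg)
      (Win.weaken
        (ih (n-1) (by simp only [fsize] at hE; omega)
          (b :: a :: Γ.erase (Formula.and a b)) Δ
          (by simp only [fsize, weight_cons] at hE ⊢; omega) ?_)
        (consSub _ (consSub _ (eraseSub _ _))) (subRefl _)))
    intro v hv
    have hb : b.eval v = true := hv b (List.mem_cons_self)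
    have ha : a.eval v = true := hv a (List.mem_cons_of_mem _ (List.mem_cons_self))
    exact hH v (all_of_erase hg (by simp [Formula.eval, ha, hb])
      (fun γ hγ => hv γ (List.mem_cons_of_mem _ (List.mem_cons_of_mem _ hγ))))
  -- left ∨
  by_cases hGor : ∃ a b, Formula.or a b ∈ Γ
  · obtain ⟨a, b, hg⟩ := hGor
    have hE := weight_erase hg
    refine Win.aOr hg ?_ ?_
    · refine Win.weaken
        (ih (n-1) (by simp only [fsize] at hE; omega) (a :: Γ.erase (Formula.or a b)) Δ
          (by simp only [fsize, weight_cons] at hE ⊢; omega) ?_)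
        (consSub _ (eraseSub _ _)) (subRefl _)
      intro v hv
      have ha : a.eval v = true := hv a (List.mem_cons_self)
      exact hH v (all_of_erase hg (by simp [Formula.eval, ha])
        (fun γ hγ => hv γ (List.mem_cons_of_mem _ hγ)))
    · refine Win.weaken
        (ih (n-1) (by simp only [fsize] at hE; omega) (b :: Γ.erase (Formula.or a b)) Δ
          (by simp only [fsize, weight_cons] at hE ⊢; omega) ?_)
        (consSub _ (eraseSub _ _)) (subRefl _)
      intro v hv
      have hb : b.eval v = true := hv b (List.mem_cons_self)
      exact hH v (all_of_erase hg (by simp [Formula.eval, hb])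
        (fun γ hγ => hv γ (List.mem_cons_of_mem _ hγ)))
  -- left ¬¬
  by_cases hGnn : ∃ a, Formula.neg (.neg a) ∈ Γ
  · obtain ⟨a, hg⟩ := hGnn
    have hE := weight_erase hg
    refine Win.aNegNeg hg
      (Win.weaken
        (ih (n-1) (by simp only [fsize] at hE; omega)
          (a :: Γ.erase (Formula.neg (.neg a))) Δ
          (by simp only [fsize, weight_cons] at hE ⊢; omega) ?_)
        (consSub _ (eraseSub _ _)) (subRefl _))
    intro v hv
    have ha : a.eval v = true := hv a (List.mem_cons_self)
    exact hH v (all_of_erase hg (by simp [Formula.eval, ha])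
      (fun γ hγ => hv γ (List.mem_cons_of_mem _ hγ)))
  -- left ¬∧
  by_cases hGnand : ∃ a b, Formula.neg (.and a b) ∈ Γ
  · obtain ⟨a, b, hg⟩ := hGnand
    have hE := weight_erase hg
    refine Win.aNegAnd hg ?_ ?_
    · refine Win.weaken
        (ih (n-1) (by simp only [fsize] at hE; omega)
          (Γ.erase (Formula.neg (.and a b))) (a :: Δ)
          (by simp only [fsize, weight_cons] at hE ⊢; omega) ?_)
        (eraseSub _ _) (subRefl _)
      intro v hv
      by_cases hA : a.eval v = true
      · exact ⟨a, List.mem_cons_self, hA⟩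
      · have hA' := eval_false hA
        obtain ⟨δ, hδ, ht⟩ := hH v (all_of_erase hg (by simp [Formula.eval, hA']) hv)
        exact ⟨δ, List.mem_cons_of_mem _ hδ, ht⟩
    · refine Win.weaken
        (ih (n-1) (by simp only [fsize] at hE; omega)
          (Γ.erase (Formula.neg (.and a b))) (b :: Δ)
          (by simp only [fsize, weight_cons] at hE ⊢; omega) ?_)
        (eraseSub _ _) (subRefl _)
      intro v hv
      by_cases hB : b.eval v = true
      · exact ⟨b, List.mem_cons_self, hB⟩
      · have hB' := eval_false hB
        obtain ⟨δ, hδ, ht⟩ := hH v (all_of_erase hg (by simp [Formula.eval, hB']) hv)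
        exact ⟨δ, List.mem_cons_of_mem _ hδ, ht⟩
  -- left ¬∨
  by_cases hGnor : ∃ a b, Formula.neg (.or a b) ∈ Γ
  · obtain ⟨a, b, hg⟩ := hGnor
    have hE := weight_erase hg
    refine Win.aNegOr hg
      (Win.weaken
        (ih (n-1) (by simp only [fsize] at hE; omega)
          (Γ.erase (Formula.neg (.or a b))) (a :: b :: Δ)
          (by simp only [fsize, weight_cons] at hE ⊢; omega) ?_)
        (eraseSub _ _) (subRefl _))
    intro v hv
    by_cases hA : a.eval v = true
    · exact ⟨a, List.mem_cons_self, hA⟩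
    by_cases hB : b.eval v = true
    · exact ⟨b, List.mem_cons_of_mem _ (List.mem_cons_self), hB⟩
    have hA' := eval_false hA
    have hB' := eval_false hB
    obtain ⟨δ, hδ, ht⟩ := hH v (all_of_erase hg (by simp [Formula.eval, hA', hB']) hv)
    exact ⟨δ, List.mem_cons_of_mem _ (List.mem_cons_of_mem _ hδ), ht⟩
  -- left ¬→
  by_cases hGnimp : ∃ a b, Formula.neg (.imp a b) ∈ Γ
  · obtain ⟨a, b, hg⟩ := hGnimp
    have hE := weight_erase hg
    refine Win.aNegImp hg
      (Win.weaken
        (ih (n-1) (by simp only [fsize] at hE; omega)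
          (a :: Γ.erase (Formula.neg (.imp a b))) (b :: Δ)
          (by simp only [fsize, weight_cons] at hE ⊢; omega) ?_)
        (consSub _ (eraseSub _ _)) (subRefl _))
    intro v hv
    have ha : a.eval v = true := hv a (List.mem_cons_self)
    by_cases hB : b.eval v = true
    · exact ⟨b, List.mem_cons_self, hB⟩
    have hB' := eval_false hB
    obtain ⟨δ, hδ, ht⟩ := hH v (all_of_erase hg (by simp [Formula.eval, ha, hB'])
      (fun γ hγ => hv γ (List.mem_cons_of_mem _ hγ)))
    exact ⟨δ, List.mem_cons_of_mem _ hδ, ht⟩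
  -- left →, atomic antecedent available
  by_cases hGia : ∃ q b, Formula.imp (.atom q) b ∈ Γ ∧ Formula.atom q ∈ Γ
  · obtain ⟨q, b, hg, hq⟩ := hGia
    have hE := weight_erase hg
    refine Win.aImpAtom hg hq
      (Win.weaken
        (ih (n-1) (by simp only [fsize] at hE; omega)
          (b :: Γ.erase (Formula.imp (.atom q) b)) Δ
          (by simp only [fsize, weight_cons] at hE ⊢; omega) ?_)
        (consSub _ (eraseSub _ _)) (subRefl _))
    intro v hv
    have hb : b.eval v = true := hv b (List.mem_cons_self)
    exact hH v (all_of_erase hg (by simp [Formula.eval, hb])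
      (fun γ hγ => hv γ (List.mem_cons_of_mem _ hγ)))
  -- left →, ¬ antecedent
  by_cases hGin : ∃ a b, Formula.imp (.neg a) b ∈ Γ
  · obtain ⟨a, b, hg⟩ := hGin
    have hE := weight_erase hg
    refine Win.aImpNeg hg ?_ ?_
    · refine Win.weaken
        (ih (n-1) (by simp only [fsize] at hE; omega)
          (a :: Γ.erase (Formula.imp (.neg a) b)) Δ
          (by simp only [fsize, weight_cons] at hE ⊢; omega) ?_)
        (consSub _ (eraseSub _ _)) (subRefl _)
      intro v hv
      have ha : a.eval v = true := hv a (List.mem_cons_self)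
      exact hH v (all_of_erase hg (by simp [Formula.eval, ha])
        (fun γ hγ => hv γ (List.mem_cons_of_mem _ hγ)))
    · refine Win.weaken
        (ih (n-1) (by simp only [fsize] at hE; omega)
          (b :: Γ.erase (Formula.imp (.neg a) b)) Δ
          (by simp only [fsize, weight_cons] at hE ⊢; omega) ?_)
        (consSub _ (eraseSub _ _)) (subRefl _)
      intro v hv
      have hb : b.eval v = true := hv b (List.mem_cons_self)
      exact hH v (all_of_erase hg (by simp [Formula.eval, hb])
        (fun γ hγ => hv γ (List.mem_cons_of_mem _ hγ)))
  -- left →, ∧ antecedent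
  by_cases hGiand : ∃ a₁ a₂ b, Formula.imp (.and a₁ a₂) b ∈ Γ
  · obtain ⟨a₁, a₂, b, hg⟩ := hGiand
    have hE := weight_erase hg
    refine Win.aImpAnd hg ?_ ?_ ?_
    · refine Win.weaken
        (ih (n-1) (by simp only [fsize] at hE; omega)
          (Γ.erase (Formula.imp (.and a₁ a₂) b)) (a₁ :: Δ)
          (by simp only [fsize, weight_cons] at hE ⊢; omega) ?_)
        (eraseSub _ _) (subRefl _)
      intro v hv
      by_cases hA : a₁.eval v = true
      · exact ⟨a₁, List.mem_cons_self, hA⟩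
      · have hA' := eval_false hA
        obtain ⟨δ, hδ, ht⟩ := hH v (all_of_erase hg (by simp [Formula.eval, hA']) hv)
        exact ⟨δ, List.mem_cons_of_mem _ hδ, ht⟩
    · refine Win.weaken
        (ih (n-1) (by simp only [fsize] at hE; omega)
          (Γ.erase (Formula.imp (.and a₁ a₂) b)) (a₂ :: Δ)
          (by simp only [fsize, weight_cons] at hE ⊢; omega) ?_)
        (eraseSub _ _) (subRefl _)
      intro v hv
      by_cases hA : a₂.eval v = true
      · exact ⟨a₂, List.mem_cons_self, hA⟩
      · have hA' := eval_false hA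
        obtain ⟨δ, hδ, ht⟩ := hH v (all_of_erase hg (by simp [Formula.eval, hA']) hv)
        exact ⟨δ, List.mem_cons_of_mem _ hδ, ht⟩
    · refine Win.weaken
        (ih (n-1) (by simp only [fsize] at hE; omega)
          (b :: Γ.erase (Formula.imp (.and a₁ a₂) b)) Δ
          (by simp only [fsize, weight_cons] at hE ⊢; omega) ?_)
        (consSub _ (eraseSub _ _)) (subRefl _)
      intro v hv
      have hb : b.eval v = true := hv b (List.mem_cons_self)
      exact hH v (all_of_erase hg (by simp [Formula.eval, hb])
        (fun γ hγ => hv γ (List.mem_cons_of_mem _ hγ)))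
  -- left →, ∨ antecedent
  by_cases hGior : ∃ a₁ a₂ b, Formula.imp (.or a₁ a₂) b ∈ Γ
  · obtain ⟨a₁, a₂, b, hg⟩ := hGior
    have hE := weight_erase hg
    refine Win.aImpOr hg ?_ ?_
    · refine Win.weaken
        (ih (n-1) (by simp only [fsize] at hE; omega)
          (Γ.erase (Formula.imp (.or a₁ a₂) b)) (a₁ :: a₂ :: Δ)
          (by simp only [fsize, weight_cons] at hE ⊢; omega) ?_)
        (eraseSub _ _) (subRefl _)
      intro v hv
      by_cases hA : a₁.eval v = true
      · exact ⟨a₁, List.mem_cons_self, hA⟩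
      by_cases hB : a₂.eval v = true
      · exact ⟨a₂, List.mem_cons_of_mem _ (List.mem_cons_self), hB⟩
      have hA' := eval_false hA
      have hB' := eval_false hB
      obtain ⟨δ, hδ, ht⟩ := hH v (all_of_erase hg (by simp [Formula.eval, hA', hB']) hv)
      exact ⟨δ, List.mem_cons_of_mem _ (List.mem_cons_of_mem _ hδ), ht⟩
    · refine Win.weaken
        (ih (n-1) (by simp only [fsize] at hE; omega)
          (b :: Γ.erase (Formula.imp (.or a₁ a₂) b)) Δ
          (by simp only [fsize, weight_cons] at hE ⊢; omega) ?_)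
        (consSub _ (eraseSub _ _)) (subRefl _)
      intro v hv
      have hb : b.eval v = true := hv b (List.mem_cons_self)
      exact hH v (all_of_erase hg (by simp [Formula.eval, hb])
        (fun γ hγ => hv γ (List.mem_cons_of_mem _ hγ)))
  -- left →, → antecedent
  by_cases hGii : ∃ a₁ a₂ b, Formula.imp (.imp a₁ a₂) b ∈ Γ
  · obtain ⟨a₁, a₂, b, hg⟩ := hGii
    have hE := weight_erase hg
    refine Win.aImpImp hg ?_ ?_
    · refine Win.weaken
        (ih (n-1) (by simp only [fsize] at hE; omega)
          (a₁ :: Γ.erase (Formula.imp (.imp a₁ a₂) b)) (a₂ :: Δ)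
          (by simp only [fsize, weight_cons] at hE ⊢; omega) ?_)
        (consSub _ (eraseSub _ _)) (subRefl _)
      intro v hv
      have ha : a₁.eval v = true := hv a₁ (List.mem_cons_self)
      by_cases hB : a₂.eval v = true
      · exact ⟨a₂, List.mem_cons_self, hB⟩
      have hB' := eval_false hB
      obtain ⟨δ, hδ, ht⟩ := hH v (all_of_erase hg (by simp [Formula.eval, ha, hB'])
        (fun γ hγ => hv γ (List.mem_cons_of_mem _ hγ)))
      exact ⟨δ, List.mem_cons_of_mem _ hδ, ht⟩
    · refine Win.weaken
        (ih (n-1) (by simp only [fsize] at hE; omega)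
          (b :: Γ.erase (Formula.imp (.imp a₁ a₂) b)) Δ
          (by simp only [fsize, weight_cons] at hE ⊢; omega) ?_)
        (consSub _ (eraseSub _ _)) (subRefl _)
      intro v hv
      have hb : b.eval v = true := hv b (List.mem_cons_self)
      exact hH v (all_of_erase hg (by simp [Formula.eval, hb])
        (fun γ hγ => hv γ (List.mem_cons_of_mem _ hγ)))
  -- leaf: no rule applies, contradiction with Holds
  · exfalso
    set v : ℕ → Bool := fun q => decide (Formula.atom q ∈ Γ) with hv
    have hΓtrue : ∀ γ ∈ Γ, γ.eval v = true := by
      intro γ hγ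
      cases γ with
      | atom q => simp [Formula.eval, hv, hγ]
      | neg a =>
        cases a with
        | atom q =>
          have hq : Formula.atom q ∉ Γ := fun hmem => hNA ⟨q, hγ, hmem⟩
          simp [Formula.eval, hv, hq]
        | neg a => exact absurd ⟨a, hγ⟩ hGnn
        | and a b => exact absurd ⟨a, b, hγ⟩ hGnand
        | or a b => exact absurd ⟨a, b, hγ⟩ hGnor
        | imp a b => exact absurd ⟨a, b, hγ⟩ hGnimp
      | and a b => exact absurd ⟨a, b, hγ⟩ hGand
      | or a b => exact absurd ⟨a, b, hγ⟩ hGor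
      | imp a b =>
        cases a with
        | atom q =>
          have hq : Formula.atom q ∉ Γ := fun hmem => hGia ⟨q, b, hγ, hmem⟩
          simp [Formula.eval, hv, hq]
        | neg a => exact absurd ⟨a, b, hγ⟩ hGin
        | and a₁ a₂ => exact absurd ⟨a₁, a₂, b, hγ⟩ hGiand
        | or a₁ a₂ => exact absurd ⟨a₁, a₂, b, hγ⟩ hGior
        | imp a₁ a₂ => exact absurd ⟨a₁, a₂, b, hγ⟩ hGii
    obtain ⟨δ, hδ, ht⟩ := hH v hΓtrue
    cases δ with
    | atom q =>
      have : Formula.atom q ∈ Γ := by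
        simpa [Formula.eval, hv] using ht
      exact hAt ⟨q, hδ, this⟩
    | neg a => exact hDneg ⟨a, hδ⟩
    | and a b => exact hDand ⟨a, b, hδ⟩
    | or a b => exact hDor ⟨a, b, hδ⟩
    | imp a b => exact hDimp ⟨a, b, hδ⟩

end CLProof
namespace CLProof

/-! ### Game states for the simulation of `Win` -/

/-- O has asserted the formula γ (at an odd position). -/
def OA (d : Dialogue) (γ : Formula) : Prop :=
  ∃ j, j % 2 = 1 ∧ d.stmtAt j = some (.form γ)

/-- There is an O-attack on record against which `a` is a permitted defense. -/
def DefSlot (d : Dialogue) (a : Formula) : Prop :=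
  ∃ r mv χ, r % 2 = 1 ∧ d.moveAt r = some mv ∧ mv.isAttack = true ∧
    d.stmtAt mv.ref = some (.form χ) ∧ Defends χ mv.statement (.form a)

/-- P can legally assert `a` (as a defense, or by attacking an O-asserted ¬a). -/
def Ast (d : Dialogue) (a : Formula) : Prop :=
  DefSlot d a ∨ OA d (.neg a)

def Good (d : Dialogue) (Γ Δ : List Formula) : Prop :=
  Legal rulesetCL d ∧ PTurn d ∧ (∀ γ ∈ Γ, OA d γ) ∧ (∀ a ∈ Δ, Ast d a)

lemma OA_extend {d : Dialogue} {m : Move} {γ : Formula} (h : OA d γ) :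
    OA (d.extend m) γ := by
  obtain ⟨j, hj, hs⟩ := h
  exact ⟨j, hj, stmtAt_extend_some hs⟩

lemma DefSlot_extend {d : Dialogue} {m : Move} {a : Formula} (h : DefSlot d a) :
    DefSlot (d.extend m) a := by
  obtain ⟨r, mv, χ, h1, h2, h3, h4, h5⟩ := h
  exact ⟨r, mv, χ, h1, moveAt_extend_some h2, h3, stmtAt_extend_some h4, h5⟩

lemma Ast_extend {d : Dialogue} {m : Move} {a : Formula} (h : Ast d a) :
    Ast (d.extend m) a := by
  rcases h with h | h
  · exact Or.inl (DefSlot_extend h)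
  · exact Or.inr (OA_extend h)

lemma PTurn_step {d : Dialogue} {mP mO : Move} (hT : PTurn d) :
    PTurn ((d.extend mP).extend mO) := by
  unfold PTurn nextPos at *
  simp only [extend_length] at *
  omega

lemma not_PTurn_extend {d : Dialogue} {m : Move} (hT : PTurn d) :
    ¬ PTurn (d.extend m) := by
  unfold PTurn nextPos at *
  simp only [extend_length] at *
  omega

lemma odd_top {d : Dialogue} {m : Move} (hT : PTurn d) :
    ((d.extend m).moves.length + 1) % 2 = 1 := by
  unfold PTurn nextPos at hT
  simp only [extend_length]
  omega

/-- New O assertion at the top of the dialogue. -/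
lemma OA_top {d : Dialogue} {m : Move} {γ : Formula}
    (hodd : (d.moves.length + 1) % 2 = 1) (hs : m.statement = .form γ) :
    OA (d.extend m) γ :=
  ⟨d.moves.length + 1, hodd, by rw [stmtAt_extend_top, hs]⟩

/-- New defense slot created by an O attack at the top. -/
lemma DefSlot_top {d : Dialogue} {m : Move} {χ x : Formula}
    (hodd : (d.moves.length + 1) % 2 = 1) (hia : m.isAttack = true)
    (hχ : d.stmtAt m.ref = some (.form χ)) (hdef : Defends χ m.statement (.form x)) :
    DefSlot (d.extend m) x :=
  ⟨d.moves.length + 1, m, χ, hodd, moveAt_extend_top d m, hia, stmtAt_extend_some hχ, hdef⟩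

/-- Unpacking a legal O-move. -/
lemma oUnpack {d' : Dialogue} {mO : Move}
    (hL' : Legal rulesetCL d') (hT' : ¬ PTurn d')
    (hLeg : LegalExt rulesetCL d' mO) :
    mO.ref = d'.moves.length ∧ MoveOK d' (d'.moves.length + 1) mO ∧
      Legal rulesetCL (d'.extend mO) := by
  obtain ⟨hp, h10, h13, hE⟩ := hLeg
  have hodd : (d'.moves.length + 1) % 2 = 1 := by
    unfold PTurn nextPos at hT'; omega
  have hmv : (d'.extend mO).moveAt (d'.moves.length + 1) = some mO := moveAt_extend_top _ _
  have href := hE (d'.moves.length + 1) mO hodd hmv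
  have hOK := MoveOK_of_extend hL'.1 (le_refl _) (moveOK_of_extend_top hp)
  refine ⟨by omega, hOK, hp, h10, h13, hE⟩

end CLProof
namespace CLProof

/-- Core stepping lemma: P asserts the formula `a` (as a defense, as an attack
    on ¬a, or as an attack on a → b); every legal O-response leads to a good
    state for the corresponding continuation. -/
lemma stepCore {Γ Δ : List Formula} {d : Dialogue} {a : Formula} {mP : Move}
    (hL : Legal rulesetCL d) (hT : PTurn d)
    (hΓ : ∀ γ ∈ Γ, OA d γ) (hΔ : ∀ x ∈ Δ, Ast d x)
    (hstmt : mP.statement = Statement.form a)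
    (hOK : MoveOK d (d.moves.length + 1) mP)
    (h13 : mP.isAttack = true → mP.ref % 2 = 1)
    (hdefC : ∀ (χ ψ' : Formula), mP.isAttack = true →
        d.stmtAt mP.ref = some (.form χ) → Defends χ mP.statement (.form ψ') →
        ∀ d'', Good d'' (ψ' :: Γ) Δ → PWinning rulesetCL d'')
    (hatomOA : ∀ q, a = .atom q → OA d (.atom q))
    (hneg : ∀ a₁, a = .neg a₁ → ∀ d', Good d' (a₁ :: Γ) Δ → PWinning rulesetCL d')
    (handL : ∀ a₁ a₂, a = .and a₁ a₂ → ∀ d', Good d' Γ (a₁ :: Δ) → PWinning rulesetCL d')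
    (handR : ∀ a₁ a₂, a = .and a₁ a₂ → ∀ d', Good d' Γ (a₂ :: Δ) → PWinning rulesetCL d')
    (hor : ∀ a₁ a₂, a = .or a₁ a₂ → ∀ d', Good d' Γ (a₁ :: a₂ :: Δ) → PWinning rulesetCL d')
    (himp : ∀ a₁ a₂, a = .imp a₁ a₂ → ∀ d', Good d' (a₁ :: Γ) (a₂ :: Δ) → PWinning rulesetCL d') :
    PWinning rulesetCL d := by
  have hL' : Legal rulesetCL (d.extend mP) := by
    refine legal_extend_P hL hT hOK ?_ h13
    intro q hq
    rw [hstmt] at hq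
    injection hq with h
    exact hatomOA q h
  refine PWinningC.pMove d mP hT hL' trivial ?_
  have hT' : ¬ PTurn (d.extend mP) := not_PTurn_extend hT
  refine PWinningC.oMoves _ hT' ?_
  intro mO hLeg
  obtain ⟨href, hOKO, hL''⟩ := oUnpack hL' hT' hLeg
  simp only [extend_length] at href
  obtain ⟨hlt, hpar, hatk, hdf⟩ := hOKO
  have hrlt : mP.ref < d.moves.length + 1 := hOK.1
  have htop : (d.extend mP).stmtAt (d.moves.length + 1) = some (.form a) := by
    rw [stmtAt_extend_top, hstmt]
  have hoddp : ((d.extend mP).moves.length + 1) % 2 = 1 := odd_top hT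
  have hχO : (d.extend mP).stmtAt mO.ref = some (.form a) := by rw [href]; exact htop
  have hGood : ∀ Γ' Δ', (∀ γ ∈ Γ', OA ((d.extend mP).extend mO) γ) →
      (∀ x ∈ Δ', Ast ((d.extend mP).extend mO) x) →
      Good ((d.extend mP).extend mO) Γ' Δ' :=
    fun Γ' Δ' h1 h2 => ⟨hL'', PTurn_step hT, h1, h2⟩
  have hΓ2 : ∀ γ ∈ Γ, OA ((d.extend mP).extend mO) γ :=
    fun γ hγ => OA_extend (OA_extend (hΓ γ hγ))
  have hΔ2 : ∀ x ∈ Δ, Ast ((d.extend mP).extend mO) x :=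
    fun x hx => Ast_extend (Ast_extend (hΔ x hx))
  cases hb : mO.isAttack with
  | false =>
    obtain ⟨mv', χ', hmv', hia', hχ', hdef'⟩ := hdf hb
    rw [href, moveAt_extend_top] at hmv'
    injection hmv' with hmv'
    subst hmv'
    rw [stmtAt_extend_of_le (by omega)] at hχ'
    obtain ⟨s, hs⟩ : ∃ s, mO.statement = s := ⟨_, rfl⟩
    rw [hs] at hdef'
    rw [hstmt] at hdef'
    cases hdef' with
    | imp a b =>
      refine hdefC _ b hia' hχ' (by rw [hstmt]; exact Defends.imp a b) _
        (hGood (b :: Γ) Δ ?_ hΔ2)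
      intro γ hγ
      rcases List.mem_cons.1 hγ with h | h
      · rw [h]; exact OA_top hoddp hs
      · exact hΓ2 γ h
  | true =>
    obtain ⟨ψ, hψ, hatt⟩ := hatk hb
    rw [href, stmtAt_extend_top, hstmt] at hψ
    injection hψ with hψ
    injection hψ with hψ
    subst hψ
    obtain ⟨s, hs⟩ : ∃ s, mO.statement = s := ⟨_, rfl⟩
    rw [hs] at hatt
    cases hatt with
    | andL a₁ a₂ =>
      refine handL a₁ a₂ rfl _ (hGood Γ (a₁ :: Δ) hΓ2 ?_)
      intro x hx
      rcases List.mem_cons.1 hx with h | h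
      · rw [h]
        exact Or.inl (DefSlot_top hoddp hb hχO (by rw [hs]; exact Defends.andL a₁ a₂))
      · exact hΔ2 x h
    | andR a₁ a₂ =>
      refine handR a₁ a₂ rfl _ (hGood Γ (a₂ :: Δ) hΓ2 ?_)
      intro x hx
      rcases List.mem_cons.1 hx with h | h
      · rw [h]
        exact Or.inl (DefSlot_top hoddp hb hχO (by rw [hs]; exact Defends.andR a₁ a₂))
      · exact hΔ2 x h
    | qmark a₁ a₂ =>
      refine hor a₁ a₂ rfl _ (hGood Γ (a₁ :: a₂ :: Δ) hΓ2 ?_)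
      intro x hx
      rcases List.mem_cons.1 hx with h | h
      · rw [h]
        exact Or.inl (DefSlot_top hoddp hb hχO (by rw [hs]; exact Defends.orL a₁ a₂))
      rcases List.mem_cons.1 h with h | h
      · rw [h]
        exact Or.inl (DefSlot_top hoddp hb hχO (by rw [hs]; exact Defends.orR a₁ a₂))
      · exact hΔ2 x h
    | imp a₁ a₂ =>
      refine himp a₁ a₂ rfl _ (hGood (a₁ :: Γ) (a₂ :: Δ) ?_ ?_)
      · intro γ hγ
        rcases List.mem_cons.1 hγ with h | h
        · rw [h]; exact OA_top hoddp hs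
        · exact hΓ2 γ h
      · intro x hx
        rcases List.mem_cons.1 hx with h | h
        · rw [h]
          exact Or.inl (DefSlot_top hoddp hb hχO (by rw [hs]; exact Defends.imp a₁ a₂))
        · exact hΔ2 x h
    | neg a₁ =>
      refine hneg a₁ rfl _ (hGood (a₁ :: Γ) Δ ?_ hΔ2)
      intro γ hγ
      rcases List.mem_cons.1 hγ with h | h
      · rw [h]; exact OA_top hoddp hs
      · exact hΓ2 γ h

end CLProof
namespace CLProof

/-- Core stepping lemma for P-moves carrying a symbolic attack (∧_L, ∧_R, ?):
    O can only defend. -/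
lemma stepSym {Γ Δ : List Formula} {d : Dialogue} {mP : Move}
    (hL : Legal rulesetCL d) (hT : PTurn d)
    (hΓ : ∀ γ ∈ Γ, OA d γ) (hΔ : ∀ x ∈ Δ, Ast d x)
    (hsym : ∀ ψ, mP.statement ≠ .form ψ)
    (hOK : MoveOK d (d.moves.length + 1) mP)
    (h13 : mP.isAttack = true → mP.ref % 2 = 1)
    (hdefC : ∀ (χ ψ' : Formula), mP.isAttack = true →
        d.stmtAt mP.ref = some (.form χ) → Defends χ mP.statement (.form ψ') →
        ∀ d'', Good d'' (ψ' :: Γ) Δ → PWinning rulesetCL d'') :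
    PWinning rulesetCL d := by
  have hL' : Legal rulesetCL (d.extend mP) := by
    refine legal_extend_P hL hT hOK ?_ h13
    intro q hq
    exact absurd hq (hsym _)
  refine PWinningC.pMove d mP hT hL' trivial ?_
  have hT' : ¬ PTurn (d.extend mP) := not_PTurn_extend hT
  refine PWinningC.oMoves _ hT' ?_
  intro mO hLeg
  obtain ⟨href, hOKO, hL''⟩ := oUnpack hL' hT' hLeg
  simp only [extend_length] at href
  obtain ⟨hlt, hpar, hatk, hdf⟩ := hOKO
  have hrlt : mP.ref < d.moves.length + 1 := hOK.1
  have hoddp : ((d.extend mP).moves.length + 1) % 2 = 1 := odd_top hT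
  cases hb : mO.isAttack with
  | true =>
    obtain ⟨ψ, hψ, hatt⟩ := hatk hb
    rw [href, stmtAt_extend_top] at hψ
    injection hψ with hψ
    exact absurd hψ (hsym ψ)
  | false =>
    obtain ⟨mv', χ', hmv', hia', hχ', hdef'⟩ := hdf hb
    rw [href, moveAt_extend_top] at hmv'
    injection hmv' with hmv'
    subst hmv'
    rw [stmtAt_extend_of_le (by omega)] at hχ'
    obtain ⟨s, hs⟩ : ∃ s, mO.statement = s := ⟨_, rfl⟩
    obtain ⟨t, ht⟩ : ∃ t, mP.statement = t := ⟨_, rfl⟩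
    rw [hs, ht] at hdef'
    -- Every defense statement is a formula
    have hform : ∃ ψ', s = .form ψ' ∧ Defends χ' t (.form ψ') := by
      cases hdef' with
      | andL a b => exact ⟨a, rfl, Defends.andL a b⟩
      | andR a b => exact ⟨b, rfl, Defends.andR a b⟩
      | orL a b => exact ⟨a, rfl, Defends.orL a b⟩
      | orR a b => exact ⟨b, rfl, Defends.orR a b⟩
      | imp a b => exact ⟨b, rfl, Defends.imp a b⟩
    obtain ⟨ψ', hs', hdef''⟩ := hform
    rw [← ht] at hdef''
    refine hdefC χ' ψ' hia' hχ' hdef'' _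
      ⟨hL'', PTurn_step hT, ?_, fun x hx => Ast_extend (Ast_extend (hΔ x hx))⟩
    intro γ hγ
    rcases List.mem_cons.1 hγ with h | h
    · rw [h]; exact OA_top hoddp (by rw [hs, hs'])
    · exact OA_extend (OA_extend (hΓ γ h))

end CLProof
namespace CLProof

/-- P asserts a formula `a` that is assertable in the current state. -/
lemma pAssert {Γ Δ : List Formula} {d : Dialogue} (a : Formula)
    (hG : Good d Γ Δ) (hA : Ast d a)
    (hatom : ∀ q, a = .atom q → OA d (.atom q))
    (hneg : ∀ a₁, a = .neg a₁ → ∀ d', Good d' (a₁ :: Γ) Δ → PWinning rulesetCL d')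
    (handL : ∀ a₁ a₂, a = .and a₁ a₂ → ∀ d', Good d' Γ (a₁ :: Δ) → PWinning rulesetCL d')
    (handR : ∀ a₁ a₂, a = .and a₁ a₂ → ∀ d', Good d' Γ (a₂ :: Δ) → PWinning rulesetCL d')
    (hor : ∀ a₁ a₂, a = .or a₁ a₂ → ∀ d', Good d' Γ (a₁ :: a₂ :: Δ) → PWinning rulesetCL d')
    (himp : ∀ a₁ a₂, a = .imp a₁ a₂ → ∀ d', Good d' (a₁ :: Γ) (a₂ :: Δ) → PWinning rulesetCL d') :
    PWinning rulesetCL d := by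
  obtain ⟨hL, hT, hΓ, hΔ⟩ := hG
  have hTe : (d.moves.length + 1) % 2 = 0 := hT
  rcases hA with ⟨r, mv, χ, hrodd, hmv, hia, hχ, hdef⟩ | ⟨j, hjodd, hj⟩
  · -- defense move
    refine stepCore (mP := ⟨.form a, false, r⟩) ⟨hL.1, hL.2⟩ hT hΓ hΔ rfl
      ⟨?_, ?_, ?_, ?_⟩ (fun h => Bool.noConfusion h) (fun _ _ h => Bool.noConfusion h)
      hatom hneg handL handR hor himp
    · have := (moveAt_bounds hmv).2; simpa using by omega
    · simpa using by omega
    · intro h; exact Bool.noConfusion h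
    · intro _; exact ⟨mv, χ, hmv, hia, hχ, hdef⟩
  · -- attack on ¬a
    refine stepCore (mP := ⟨.form a, true, j⟩) ⟨hL.1, hL.2⟩ hT hΓ hΔ rfl
      ⟨?_, ?_, ?_, ?_⟩ (fun _ => hjodd) ?_
      hatom hneg handL handR hor himp
    · have := stmtAt_le_of_some hj; simpa using by omega
    · simpa using by omega
    · intro _; exact ⟨.neg a, hj, Attacks.neg a⟩
    · intro h; exact Bool.noConfusion h
    · intro χ ψ' _ hst hdef
      rw [hj] at hst
      injection hst with hst
      injection hst with hst
      subst hst
      cases hdef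

/-- P attacks an O-asserted conjunction with ∧_L. -/
lemma pAttackAndL {Γ Δ : List Formula} {d : Dialogue} {a b : Formula}
    (hG : Good d Γ Δ) (hOA : OA d (.and a b))
    (hc : ∀ d', Good d' (a :: Γ) Δ → PWinning rulesetCL d') :
    PWinning rulesetCL d := by
  obtain ⟨hL, hT, hΓ, hΔ⟩ := hG
  have hTe : (d.moves.length + 1) % 2 = 0 := hT
  obtain ⟨j, hjodd, hj⟩ := hOA
  refine stepSym (mP := ⟨.andL, true, j⟩) ⟨hL.1, hL.2⟩ hT hΓ hΔ
    (fun ψ h => Statement.noConfusion h) ⟨?_, ?_, ?_, ?_⟩ (fun _ => hjodd) ?_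
  · have := stmtAt_le_of_some hj; simpa using by omega
  · simpa using by omega
  · intro _; exact ⟨.and a b, hj, Attacks.andL a b⟩
  · intro h; exact Bool.noConfusion h
  · intro χ ψ' _ hst hdef
    rw [hj] at hst
    injection hst with hst
    injection hst with hst
    subst hst
    cases hdef
    exact hc

/-- P attacks an O-asserted conjunction with ∧_R. -/
lemma pAttackAndR {Γ Δ : List Formula} {d : Dialogue} {a b : Formula}
    (hG : Good d Γ Δ) (hOA : OA d (.and a b))
    (hc : ∀ d', Good d' (b :: Γ) Δ → PWinning rulesetCL d') :
    PWinning rulesetCL d := by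
  obtain ⟨hL, hT, hΓ, hΔ⟩ := hG
  have hTe : (d.moves.length + 1) % 2 = 0 := hT
  obtain ⟨j, hjodd, hj⟩ := hOA
  refine stepSym (mP := ⟨.andR, true, j⟩) ⟨hL.1, hL.2⟩ hT hΓ hΔ
    (fun ψ h => Statement.noConfusion h) ⟨?_, ?_, ?_, ?_⟩ (fun _ => hjodd) ?_
  · have := stmtAt_le_of_some hj; simpa using by omega
  · simpa using by omega
  · intro _; exact ⟨.and a b, hj, Attacks.andR a b⟩
  · intro h; exact Bool.noConfusion h
  · intro χ ψ' _ hst hdef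
    rw [hj] at hst
    injection hst with hst
    injection hst with hst
    subst hst
    cases hdef
    exact hc

/-- P attacks an O-asserted disjunction with ?. -/
lemma pAttackOr {Γ Δ : List Formula} {d : Dialogue} {a b : Formula}
    (hG : Good d Γ Δ) (hOA : OA d (.or a b))
    (hc1 : ∀ d', Good d' (a :: Γ) Δ → PWinning rulesetCL d')
    (hc2 : ∀ d', Good d' (b :: Γ) Δ → PWinning rulesetCL d') :
    PWinning rulesetCL d := by
  obtain ⟨hL, hT, hΓ, hΔ⟩ := hG
  have hTe : (d.moves.length + 1) % 2 = 0 := hT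
  obtain ⟨j, hjodd, hj⟩ := hOA
  refine stepSym (mP := ⟨.qmark, true, j⟩) ⟨hL.1, hL.2⟩ hT hΓ hΔ
    (fun ψ h => Statement.noConfusion h) ⟨?_, ?_, ?_, ?_⟩ (fun _ => hjodd) ?_
  · have := stmtAt_le_of_some hj; simpa using by omega
  · simpa using by omega
  · intro _; exact ⟨.or a b, hj, Attacks.qmark a b⟩
  · intro h; exact Bool.noConfusion h
  · intro χ ψ' _ hst hdef
    rw [hj] at hst
    injection hst with hst
    injection hst with hst
    subst hst
    cases hdef
    · exact hc1
    · exact hc2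

/-- P attacks an O-asserted implication by asserting its antecedent. -/
lemma pAttackImp {Γ Δ : List Formula} {d : Dialogue} {a b : Formula}
    (hG : Good d Γ Δ) (hOA : OA d (.imp a b))
    (hatom : ∀ q, a = .atom q → OA d (.atom q))
    (hb : ∀ d', Good d' (b :: Γ) Δ → PWinning rulesetCL d')
    (hneg : ∀ a₁, a = .neg a₁ → ∀ d', Good d' (a₁ :: Γ) Δ → PWinning rulesetCL d')
    (handL : ∀ a₁ a₂, a = .and a₁ a₂ → ∀ d', Good d' Γ (a₁ :: Δ) → PWinning rulesetCL d')
    (handR : ∀ a₁ a₂, a = .and a₁ a₂ → ∀ d', Good d' Γ (a₂ :: Δ) → PWinning rulesetCL d')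
    (hor : ∀ a₁ a₂, a = .or a₁ a₂ → ∀ d', Good d' Γ (a₁ :: a₂ :: Δ) → PWinning rulesetCL d')
    (himp : ∀ a₁ a₂, a = .imp a₁ a₂ → ∀ d', Good d' (a₁ :: Γ) (a₂ :: Δ) → PWinning rulesetCL d') :
    PWinning rulesetCL d := by
  obtain ⟨hL, hT, hΓ, hΔ⟩ := hG
  have hTe : (d.moves.length + 1) % 2 = 0 := hT
  obtain ⟨j, hjodd, hj⟩ := hOA
  refine stepCore (mP := ⟨.form a, true, j⟩) ⟨hL.1, hL.2⟩ hT hΓ hΔ rfl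
    ⟨?_, ?_, ?_, ?_⟩ (fun _ => hjodd) ?_
    hatom hneg handL handR hor himp
  · have := stmtAt_le_of_some hj; simpa using by omega
  · simpa using by omega
  · intro _; exact ⟨.imp a b, hj, Attacks.imp a b⟩
  · intro h; exact Bool.noConfusion h
  · intro χ ψ' _ hst hdef
    rw [hj] at hst
    injection hst with hst
    injection hst with hst
    subst hst
    cases hdef
    exact hb

end CLProof
namespace CLProof

theorem WinSound {Γ Δ : List Formula} (h : Win Γ Δ) :
    ∀ d, Good d Γ Δ → PWinning rulesetCL d := by
  induction h with
  | weaken hw hsΓ hsΔ ih =>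
    intro d hG
    exact ih d ⟨hG.1, hG.2.1, fun γ hγ => hG.2.2.1 γ (hsΓ hγ),
      fun x hx => hG.2.2.2 x (hsΔ hx)⟩
  | @dAtom Γ Δ q hΔm hΓm =>
    intro d hG
    refine pAssert (.atom q) hG (hG.2.2.2 _ hΔm) ?_
      (fun a₁ h => nomatch h) (fun a₁ a₂ h => nomatch h) (fun a₁ a₂ h => nomatch h)
      (fun a₁ a₂ h => nomatch h) (fun a₁ a₂ h => nomatch h)
    intro q' hq'
    rw [← hq']
    exact hG.2.2.1 _ hΓm
  | @dNeg Γ Δ a hm hw ih =>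
    intro d hG
    refine pAssert (.neg a) hG (hG.2.2.2 _ hm) (fun q h => nomatch h) ?_
      (fun a₁ a₂ h => nomatch h) (fun a₁ a₂ h => nomatch h)
      (fun a₁ a₂ h => nomatch h) (fun a₁ a₂ h => nomatch h)
    intro a₁ h d' hG'
    injection h with h
    subst h
    exact ih d' hG'
  | @dAnd Γ Δ a b hm hw1 hw2 ih1 ih2 =>
    intro d hG
    refine pAssert (.and a b) hG (hG.2.2.2 _ hm) (fun q h => nomatch h)
      (fun a₁ h => nomatch h) ?_ ?_ (fun a₁ a₂ h => nomatch h) (fun a₁ a₂ h => nomatch h)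
    · intro a₁ a₂ h d' hG'
      injection h with h1 h2; subst h1; subst h2
      exact ih1 d' hG'
    · intro a₁ a₂ h d' hG'
      injection h with h1 h2; subst h1; subst h2
      exact ih2 d' hG'
  | @dOr Γ Δ a b hm hw ih =>
    intro d hG
    refine pAssert (.or a b) hG (hG.2.2.2 _ hm) (fun q h => nomatch h)
      (fun a₁ h => nomatch h) (fun a₁ a₂ h => nomatch h) (fun a₁ a₂ h => nomatch h)
      ?_ (fun a₁ a₂ h => nomatch h)
    intro a₁ a₂ h d' hG'
    injection h with h1 h2; subst h1; subst h2
    exact ih d' hG'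
  | @dImp Γ Δ a b hm hw ih =>
    intro d hG
    refine pAssert (.imp a b) hG (hG.2.2.2 _ hm) (fun q h => nomatch h)
      (fun a₁ h => nomatch h) (fun a₁ a₂ h => nomatch h) (fun a₁ a₂ h => nomatch h)
      (fun a₁ a₂ h => nomatch h) ?_
    intro a₁ a₂ h d' hG'
    injection h with h1 h2; subst h1; subst h2
    exact ih d' hG'
  | @aAndL Γ Δ a b hm hw ih =>
    intro d hG
    exact pAttackAndL hG (hG.2.2.1 _ hm) ih
  | @aAndR Γ Δ a b hm hw ih =>
    intro d hG
    exact pAttackAndR hG (hG.2.2.1 _ hm) ih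
  | @aOr Γ Δ a b hm hw1 hw2 ih1 ih2 =>
    intro d hG
    exact pAttackOr hG (hG.2.2.1 _ hm) ih1 ih2
  | @aNegAtom Γ Δ q h1 h2 =>
    intro d hG
    refine pAssert (.atom q) hG (Or.inr (hG.2.2.1 _ h1)) ?_
      (fun a₁ h => nomatch h) (fun a₁ a₂ h => nomatch h) (fun a₁ a₂ h => nomatch h)
      (fun a₁ a₂ h => nomatch h) (fun a₁ a₂ h => nomatch h)
    intro q' hq'
    rw [← hq']
    exact hG.2.2.1 _ h2
  | @aNegNeg Γ Δ a hm hw ih =>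
    intro d hG
    refine pAssert (.neg a) hG (Or.inr (hG.2.2.1 _ hm)) (fun q h => nomatch h) ?_
      (fun a₁ a₂ h => nomatch h) (fun a₁ a₂ h => nomatch h)
      (fun a₁ a₂ h => nomatch h) (fun a₁ a₂ h => nomatch h)
    intro a₁ h d' hG'
    injection h with h; subst h
    exact ih d' hG'
  | @aNegAnd Γ Δ a b hm hw1 hw2 ih1 ih2 =>
    intro d hG
    refine pAssert (.and a b) hG (Or.inr (hG.2.2.1 _ hm)) (fun q h => nomatch h)
      (fun a₁ h => nomatch h) ?_ ?_ (fun a₁ a₂ h => nomatch h) (fun a₁ a₂ h => nomatch h)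
    · intro a₁ a₂ h d' hG'
      injection h with h1 h2; subst h1; subst h2
      exact ih1 d' hG'
    · intro a₁ a₂ h d' hG'
      injection h with h1 h2; subst h1; subst h2
      exact ih2 d' hG'
  | @aNegOr Γ Δ a b hm hw ih =>
    intro d hG
    refine pAssert (.or a b) hG (Or.inr (hG.2.2.1 _ hm)) (fun q h => nomatch h)
      (fun a₁ h => nomatch h) (fun a₁ a₂ h => nomatch h) (fun a₁ a₂ h => nomatch h)
      ?_ (fun a₁ a₂ h => nomatch h)
    intro a₁ a₂ h d' hG'
    injection h with h1 h2; subst h1; subst h2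
    exact ih d' hG'
  | @aNegImp Γ Δ a b hm hw ih =>
    intro d hG
    refine pAssert (.imp a b) hG (Or.inr (hG.2.2.1 _ hm)) (fun q h => nomatch h)
      (fun a₁ h => nomatch h) (fun a₁ a₂ h => nomatch h) (fun a₁ a₂ h => nomatch h)
      (fun a₁ a₂ h => nomatch h) ?_
    intro a₁ a₂ h d' hG'
    injection h with h1 h2; subst h1; subst h2
    exact ih d' hG'
  | @aImpAtom Γ Δ q b hm hq hw ih =>
    intro d hG
    refine pAttackImp hG (hG.2.2.1 _ hm) ?_ ih
      (fun a₁ h => nomatch h) (fun a₁ a₂ h => nomatch h) (fun a₁ a₂ h => nomatch h)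
      (fun a₁ a₂ h => nomatch h) (fun a₁ a₂ h => nomatch h)
    intro q' hq'
    rw [← hq']
    exact hG.2.2.1 _ hq
  | @aImpNeg Γ Δ a b hm hw1 hw2 ih1 ih2 =>
    intro d hG
    refine pAttackImp hG (hG.2.2.1 _ hm) (fun q h => nomatch h) ih2 ?_
      (fun a₁ a₂ h => nomatch h) (fun a₁ a₂ h => nomatch h)
      (fun a₁ a₂ h => nomatch h) (fun a₁ a₂ h => nomatch h)
    intro a₁ h d' hG'
    injection h with h; subst h
    exact ih1 d' hG'
  | @aImpAnd Γ Δ a₁ a₂ b hm hw1 hw2 hw3 ih1 ih2 ih3 =>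
    intro d hG
    refine pAttackImp hG (hG.2.2.1 _ hm) (fun q h => nomatch h) ih3
      (fun x h => nomatch h) ?_ ?_
      (fun x y h => nomatch h) (fun x y h => nomatch h)
    · intro x y h d' hG'
      injection h with h1 h2; subst h1; subst h2
      exact ih1 d' hG'
    · intro x y h d' hG'
      injection h with h1 h2; subst h1; subst h2
      exact ih2 d' hG'
  | @aImpOr Γ Δ a₁ a₂ b hm hw1 hw2 ih1 ih2 =>
    intro d hG
    refine pAttackImp hG (hG.2.2.1 _ hm) (fun q h => nomatch h) ih2
      (fun x h => nomatch h) (fun x y h => nomatch h) (fun x y h => nomatch h)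
      ?_ (fun x y h => nomatch h)
    intro x y h d' hG'
    injection h with h1 h2; subst h1; subst h2
    exact ih1 d' hG'
  | @aImpImp Γ Δ a₁ a₂ b hm hw1 hw2 ih1 ih2 =>
    intro d hG
    refine pAttackImp hG (hG.2.2.1 _ hm) (fun q h => nomatch h) ih2
      (fun x h => nomatch h) (fun x y h => nomatch h) (fun x y h => nomatch h)
      (fun x y h => nomatch h) ?_
    intro x y h d' hG'
    injection h with h1 h2; subst h1; subst h2
    exact ih1 d' hG'

end CLProof
namespace CLProof

lemma legal_init {φ : Formula} (hφ : ∀ q, φ ≠ .atom q) :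
    Legal rulesetCL ⟨φ, []⟩ := by
  refine ⟨?_, ?_, ?_, ?_⟩
  · intro i m h; simp at h
  · intro n p hn hs
    unfold Dialogue.stmtAt at hs
    by_cases h0 : n = 0
    · rw [if_pos h0] at hs
      injection hs with hs
      injection hs with hs
      exact absurd hs (hφ p)
    · rw [if_neg h0] at hs
      simp at hs
  · intro n1 n2 r hr h1 h2
    exfalso
    obtain ⟨mv, hmv, -, -⟩ := h1
    unfold Dialogue.moveAt at hmv
    by_cases h0 : n1 = 0
    · rw [if_pos h0] at hmv; cases hmv
    · rw [if_neg h0] at hmv; simp at hmv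
  · intro n m hn hm
    exfalso
    unfold Dialogue.moveAt at hm
    by_cases h0 : n = 0
    · rw [if_pos h0] at hm; cases hm
    · rw [if_neg h0] at hm; simp at hm

theorem taut_valid {φ : Formula} (hT : Tautology φ) : valid rulesetCL φ := by
  have hφ : ∀ q, φ ≠ .atom q := by
    intro q h
    have := hT (fun _ => false)
    rw [h] at this
    simp [Formula.eval] at this
  set d0 : Dialogue := ⟨φ, []⟩ with hd0
  have hL0 : Legal rulesetCL d0 := legal_init hφ
  refine ⟨hL0, ?_⟩
  refine PWinningC.oMoves d0 (by simp [PTurn, nextPos, hd0]) ?_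
  intro m hLeg
  have hL1 : Legal rulesetCL (d0.extend m) := hLeg
  obtain ⟨hp, h10, h13, hE⟩ := hLeg
  have hmv : (d0.extend m).moveAt 1 = some m := moveAt_extend_top d0 m
  have href : m.ref = 0 := by
    have := hE 1 m (by norm_num) hmv
    simpa using this
  have hOK : MoveOK (d0.extend m) 1 m := by
    have := hp 0 m (by simp [hd0])
    simpa using this
  have hgood : ∀ Γ Δ, (∀ γ ∈ Γ, OA (d0.extend m) γ) → (∀ x ∈ Δ, Ast (d0.extend m) x) →
      Holds Γ Δ → PWinning rulesetCL (d0.extend m) := by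
    intro Γ Δ h1 h2 hh
    exact WinSound (complete (weight Γ + weight Δ) Γ Δ (le_refl _) hh) _
      ⟨hL1, by simp [PTurn, nextPos, hd0], h1, h2⟩
  have htop1 : (d0.extend m).stmtAt 1 = some m.statement := stmtAt_extend_top d0 m
  have hzero : (d0.extend m).stmtAt 0 = some (.form φ) := rfl
  cases hb : m.isAttack with
  | false =>
    obtain ⟨a', χ, hma, -, -, -⟩ := hOK.2.2.2 hb
    rw [href] at hma
    exact absurd hma (by simp [Dialogue.moveAt])
  | true =>
    obtain ⟨ψ, hψ, hatt⟩ := hOK.2.2.1 hb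
    rw [href, hzero] at hψ
    injection hψ with hψ
    injection hψ with hψ
    subst hψ
    obtain ⟨s, hs⟩ : ∃ s, m.statement = s := ⟨_, rfl⟩
    rw [hs] at hatt
    cases hatt with
    | andL a b =>
      refine hgood [] [a] (by simp) ?_ ?_
      · intro x hx
        rcases List.mem_singleton.1 hx with rfl
        exact Or.inl ⟨1, m, _, by norm_num, hmv, hb, by rw [href]; exact hzero,
          by rw [hs]; exact Defends.andL _ _⟩
      · intro v _
        have := hT v
        simp [Formula.eval] at this
        exact ⟨a, List.mem_singleton.2 rfl, this.1⟩
    | andR a b =>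
      refine hgood [] [b] (by simp) ?_ ?_
      · intro x hx
        rcases List.mem_singleton.1 hx with rfl
        exact Or.inl ⟨1, m, _, by norm_num, hmv, hb, by rw [href]; exact hzero,
          by rw [hs]; exact Defends.andR _ _⟩
      · intro v _
        have := hT v
        simp [Formula.eval] at this
        exact ⟨b, List.mem_singleton.2 rfl, this.2⟩
    | qmark a b =>
      refine hgood [] [a, b] (by simp) ?_ ?_
      · intro x hx
        rcases List.mem_cons.1 hx with rfl | hx
        · exact Or.inl ⟨1, m, _, by norm_num, hmv, hb, by rw [href]; exact hzero,
            by rw [hs]; exact Defends.orL _ _⟩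
        rcases List.mem_singleton.1 hx with rfl
        exact Or.inl ⟨1, m, _, by norm_num, hmv, hb, by rw [href]; exact hzero,
          by rw [hs]; exact Defends.orR _ _⟩
      · intro v _
        have := hT v
        simp [Formula.eval] at this
        rcases this with h | h
        · exact ⟨a, List.mem_cons_self, h⟩
        · exact ⟨b, List.mem_cons_of_mem _ (List.mem_singleton.2 rfl), h⟩
    | imp a b =>
      refine hgood [a] [b] ?_ ?_ ?_
      · intro γ hγ
        rcases List.mem_singleton.1 hγ with rfl
        exact ⟨1, by norm_num, by rw [htop1, hs]⟩
      · intro x hx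
        rcases List.mem_singleton.1 hx with rfl
        exact Or.inl ⟨1, m, _, by norm_num, hmv, hb, by rw [href]; exact hzero,
          by rw [hs]; exact Defends.imp _ _⟩
      · intro v hv
        have := hT v
        have ha := hv a (List.mem_singleton.2 rfl)
        simp [Formula.eval, ha] at this
        exact ⟨b, List.mem_singleton.2 rfl, this⟩
    | neg a =>
      refine hgood [a] [] ?_ (by simp) ?_
      · intro γ hγ
        rcases List.mem_singleton.1 hγ with rfl
        exact ⟨1, by norm_num, by rw [htop1, hs]⟩
      · intro v hv
        have := hT v
        have ha := hv a (List.mem_singleton.2 rfl)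
        simp [Formula.eval, ha] at this

end CLProof
namespace CLProof

/-! ### Soundness: CL-validity implies classical truth -/

lemma neg_true_eval {v : ℕ → Bool} {a : Formula} (h : (Formula.neg a).eval v = true) :
    a.eval v = false := by
  cases ha : a.eval v <;> simp_all [Formula.eval]

lemma neg_false_eval {v : ℕ → Bool} {a : Formula} (h : (Formula.neg a).eval v = false) :
    a.eval v = true := by
  cases ha : a.eval v <;> simp_all [Formula.eval]

lemma and_true_eval {v : ℕ → Bool} {a b : Formula} (h : (Formula.and a b).eval v = true) :
    a.eval v = true ∧ b.eval v = true := by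
  cases ha : a.eval v <;> cases hb : b.eval v <;> simp_all [Formula.eval]

lemma and_false_eval {v : ℕ → Bool} {a b : Formula} (h : (Formula.and a b).eval v = false) :
    a.eval v = false ∨ b.eval v = false := by
  cases ha : a.eval v <;> cases hb : b.eval v <;> simp_all [Formula.eval]

lemma or_true_eval {v : ℕ → Bool} {a b : Formula} (h : (Formula.or a b).eval v = true) :
    a.eval v = true ∨ b.eval v = true := by
  cases ha : a.eval v <;> cases hb : b.eval v <;> simp_all [Formula.eval]

lemma or_false_eval {v : ℕ → Bool} {a b : Formula} (h : (Formula.or a b).eval v = false) :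
    a.eval v = false ∧ b.eval v = false := by
  cases ha : a.eval v <;> cases hb : b.eval v <;> simp_all [Formula.eval]

lemma imp_true_eval {v : ℕ → Bool} {a b : Formula} (h : (Formula.imp a b).eval v = true)
    (ha : a.eval v = true) : b.eval v = true := by
  cases hb : b.eval v <;> simp_all [Formula.eval]

lemma imp_false_eval {v : ℕ → Bool} {a b : Formula} (h : (Formula.imp a b).eval v = false) :
    a.eval v = true ∧ b.eval v = false := by
  cases ha : a.eval v <;> cases hb : b.eval v <;> simp_all [Formula.eval]

/-- Every formula asserted by O evaluates to true. -/
def OTrue (v : ℕ → Bool) (d : Dialogue) : Prop :=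
  ∀ j ψ, j % 2 = 1 → d.stmtAt j = some (.form ψ) → ψ.eval v = true

/-- Every O attack targets a false formula and admits only false defenses. -/
def OAtk (v : ℕ → Bool) (d : Dialogue) : Prop :=
  ∀ j mv, j % 2 = 1 → d.moveAt j = some mv → mv.isAttack = true →
    ∃ χ, d.stmtAt mv.ref = some (.form χ) ∧ χ.eval v = false ∧
      (∀ s, Defends χ mv.statement s → ∃ ψ, s = .form ψ ∧ ψ.eval v = false)

/-- At O's turn, the last P statement is either a false assertion or an attack
    on a true formula admitting a true defense. -/
def LastGood (v : ℕ → Bool) (d : Dialogue) : Prop :=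
  (∃ ψ, d.stmtAt d.moves.length = some (.form ψ) ∧ ψ.eval v = false) ∨
  (∃ mv χ ψ, d.moveAt d.moves.length = some mv ∧ mv.isAttack = true ∧
     d.stmtAt mv.ref = some (.form χ) ∧ Defends χ mv.statement (.form ψ) ∧
     ψ.eval v = true)

def Inv (v : ℕ → Bool) (d : Dialogue) : Prop :=
  Legal rulesetCL d ∧ OTrue v d ∧ OAtk v d ∧ (¬ PTurn d → LastGood v d)

end CLProof
namespace CLProof

theorem notWin (v : ℕ → Bool) :
    ∀ d, PWinning rulesetCL d → Inv v d → False := by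
  intro d h
  unfold PWinning at h
  induction h with
  | pMove d m hturn hm hC hwin ih =>
    intro hInv
    obtain ⟨hL, hOT, hOA, -⟩ := hInv
    have hTe : (d.moves.length + 1) % 2 = 0 := hturn
    apply ih
    have hOT' : OTrue v (d.extend m) := by
      intro j ψ hj hs
      have hb := stmtAt_le_of_some hs
      simp only [extend_length] at hb
      rcases Nat.lt_or_ge j (d.moves.length + 1) with hlt | hge
      · rw [stmtAt_extend_of_le (by omega)] at hs
        exact hOT j ψ hj hs
      · omega
    refine ⟨hm, hOT', ?_, ?_⟩
    · intro j mv hj hmv hia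
      have hb := moveAt_bounds hmv
      simp only [extend_length] at hb
      rcases Nat.lt_or_ge j (d.moves.length + 1) with hlt | hge
      · rw [moveAt_extend_of_le (by omega)] at hmv
        obtain ⟨χ, h1, h2, h3⟩ := hOA j mv hj hmv hia
        exact ⟨χ, stmtAt_extend_some h1, h2, h3⟩
      · omega
    · intro _x
      have hOKd : MoveOK d (d.moves.length + 1) m := by
        have := moveOK_of_extend_top hm.1
        exact MoveOK_of_extend hL.1 (le_refl _) this
      have hrodd : m.ref % 2 = 1 := by
        have := hOKd.2.1; omega
      have htop : (d.extend m).stmtAt ((d.extend m).moves.length) = some m.statement := by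
        simp only [extend_length]
        exact stmtAt_extend_top d m
      have hmvtop : (d.extend m).moveAt ((d.extend m).moves.length) = some m := by
        simp only [extend_length]
        exact moveAt_extend_top d m
      cases hb : m.isAttack with
      | true =>
        obtain ⟨ψ, hψ, hatt⟩ := hOKd.2.2.1 hb
        have hψt : ψ.eval v = true := hOT m.ref ψ hrodd hψ
        obtain ⟨s, hs⟩ : ∃ s, m.statement = s := ⟨_, rfl⟩
        rw [hs] at hatt
        cases hatt with
        | neg a =>
          refine Or.inl ⟨a, by rw [htop, hs], neg_true_eval hψt⟩
        | imp a b =>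
          by_cases ha : a.eval v = true
          · exact Or.inr ⟨m, .imp a b, b, hmvtop, hb,
              stmtAt_extend_some hψ, by rw [hs]; exact Defends.imp a b,
              imp_true_eval hψt ha⟩
          · exact Or.inl ⟨a, by rw [htop, hs], eval_false ha⟩
        | andL a b =>
          exact Or.inr ⟨m, .and a b, a, hmvtop, hb, stmtAt_extend_some hψ,
            by rw [hs]; exact Defends.andL a b, (and_true_eval hψt).1⟩
        | andR a b =>
          exact Or.inr ⟨m, .and a b, b, hmvtop, hb, stmtAt_extend_some hψ,
            by rw [hs]; exact Defends.andR a b, (and_true_eval hψt).2⟩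
        | qmark a b =>
          rcases or_true_eval hψt with h | h
          · exact Or.inr ⟨m, .or a b, a, hmvtop, hb, stmtAt_extend_some hψ,
              by rw [hs]; exact Defends.orL a b, h⟩
          · exact Or.inr ⟨m, .or a b, b, hmvtop, hb, stmtAt_extend_some hψ,
              by rw [hs]; exact Defends.orR a b, h⟩
      | false =>
        obtain ⟨mv', χ', hmv', hia', hχ', hdef'⟩ := hOKd.2.2.2 hb
        obtain ⟨χ₀, hχ₀, hχ₀f, hdall⟩ := hOA m.ref mv' hrodd hmv' hia'
        rw [hχ₀] at hχ'
        injection hχ' with hχ'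
        injection hχ' with hχ'
        subst hχ'
        obtain ⟨ψ, hsψ, hψf⟩ := hdall m.statement hdef'
        exact Or.inl ⟨ψ, by rw [htop, hsψ], hψf⟩
  | oMoves d hturn hall ih =>
    intro hInv
    obtain ⟨hL, hOT, hOA, hLG⟩ := hInv
    have hLG := hLG hturn
    have hTe : (d.moves.length + 1) % 2 = 1 := by
      unfold PTurn nextPos at hturn; omega
    have hPT' : ∀ m : Move, PTurn (d.extend m) := by
      intro m
      show ((d.extend m).moves.length + 1) % 2 = 0
      simp only [extend_length]; omega
    -- common constructor for O's reply
    have step : ∀ (mO : Move), mO.ref = d.moves.length →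
        MoveOK d (d.moves.length + 1) mO →
        OTrue v (d.extend mO) → OAtk v (d.extend mO) → False := by
      intro mO hr hOKd hOT' hOA'
      have hLeg : LegalExt rulesetCL d mO := legal_extend_O hL hturn hOKd hr
      exact ih mO hLeg ⟨hLeg, hOT', hOA', fun hp => absurd (hPT' mO) hp⟩
    -- transfer of old O facts
    have hOTold : ∀ (mO : Move), (∀ ψ, mO.statement = .form ψ → ψ.eval v = true) →
        OTrue v (d.extend mO) := by
      intro mO hnew j ψ hj hs
      have hbd := stmtAt_le_of_some hs
      simp only [extend_length] at hbd
      rcases Nat.lt_or_ge j (d.moves.length + 1) with hlt | hge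
      · rw [stmtAt_extend_of_le (by omega)] at hs
        exact hOT j ψ hj hs
      · have hj' : j = d.moves.length + 1 := by omega
        subst hj'
        rw [stmtAt_extend_top] at hs
        injection hs with hs
        exact hnew ψ hs
    have hOAold : ∀ (mO : Move),
        (mO.isAttack = true → ∃ χ, d.stmtAt mO.ref = some (.form χ) ∧
          χ.eval v = false ∧
          (∀ s, Defends χ mO.statement s → ∃ ψ, s = .form ψ ∧ ψ.eval v = false)) →
        OAtk v (d.extend mO) := by
      intro mO hnew j mv hj hmv hia
      have hbd := moveAt_bounds hmv
      simp only [extend_length] at hbd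
      rcases Nat.lt_or_ge j (d.moves.length + 1) with hlt | hge
      · rw [moveAt_extend_of_le (by omega)] at hmv
        obtain ⟨χ, h1, h2, h3⟩ := hOA j mv hj hmv hia
        exact ⟨χ, stmtAt_extend_some h1, h2, h3⟩
      · have hj' : j = d.moves.length + 1 := by omega
        subst hj'
        rw [moveAt_extend_top] at hmv
        injection hmv with hmv
        subst hmv
        obtain ⟨χ, h1, h2, h3⟩ := hnew hia
        exact ⟨χ, stmtAt_extend_some h1, h2, h3⟩
    rcases hLG with ⟨ψ, hψ, hψf⟩ | ⟨mv, χ, ψ, hmv, hia, hχ, hdef, hψt⟩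
    · -- last P statement is a false formula: O attacks it
      cases ψ with
      | atom q =>
        obtain ⟨j, hjlt, hjodd, hjs⟩ := hL.2.1 d.moves.length q (by omega) hψ
        have := hOT j _ hjodd hjs
        rw [this] at hψf
        cases hψf
      | neg a =>
        refine step ⟨.form a, true, d.moves.length⟩ rfl
          ⟨by show d.moves.length < d.moves.length + 1; omega, by show d.moves.length % 2 ≠ (d.moves.length + 1) % 2; omega, fun _ => ⟨_, hψ, Attacks.neg a⟩,
            fun hx => Bool.noConfusion hx⟩
          (hOTold _ ?_) (hOAold _ ?_)
        · intro ψ' hs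
          injection hs with hs
          rw [← hs]
          exact neg_false_eval hψf
        · intro _x
          refine ⟨.neg a, hψ, hψf, ?_⟩
          intro s hd
          cases hd
      | and a b =>
        rcases and_false_eval hψf with hf | hf
        · refine step ⟨.andL, true, d.moves.length⟩ rfl
            ⟨by show d.moves.length < d.moves.length + 1; omega, by show d.moves.length % 2 ≠ (d.moves.length + 1) % 2; omega, fun _ => ⟨_, hψ, Attacks.andL a b⟩,
              fun hx => Bool.noConfusion hx⟩
            (hOTold _ ?_) (hOAold _ ?_)
          · intro ψ' hs; cases hs
          · intro _x
            refine ⟨.and a b, hψ, hψf, ?_⟩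
            intro s hd
            cases hd
            exact ⟨a, rfl, hf⟩
        · refine step ⟨.andR, true, d.moves.length⟩ rfl
            ⟨by show d.moves.length < d.moves.length + 1; omega, by show d.moves.length % 2 ≠ (d.moves.length + 1) % 2; omega, fun _ => ⟨_, hψ, Attacks.andR a b⟩,
              fun hx => Bool.noConfusion hx⟩
            (hOTold _ ?_) (hOAold _ ?_)
          · intro ψ' hs; cases hs
          · intro _x
            refine ⟨.and a b, hψ, hψf, ?_⟩
            intro s hd
            cases hd
            exact ⟨b, rfl, hf⟩
      | or a b =>
        obtain ⟨hfa, hfb⟩ := or_false_eval hψf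
        refine step ⟨.qmark, true, d.moves.length⟩ rfl
          ⟨by show d.moves.length < d.moves.length + 1; omega, by show d.moves.length % 2 ≠ (d.moves.length + 1) % 2; omega, fun _ => ⟨_, hψ, Attacks.qmark a b⟩,
            fun hx => Bool.noConfusion hx⟩
          (hOTold _ ?_) (hOAold _ ?_)
        · intro ψ' hs; cases hs
        · intro _x
          refine ⟨.or a b, hψ, hψf, ?_⟩
          intro s hd
          cases hd
          · exact ⟨a, rfl, hfa⟩
          · exact ⟨b, rfl, hfb⟩
      | imp a b =>
        obtain ⟨hta, hfb⟩ := imp_false_eval hψf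
        refine step ⟨.form a, true, d.moves.length⟩ rfl
          ⟨by show d.moves.length < d.moves.length + 1; omega, by show d.moves.length % 2 ≠ (d.moves.length + 1) % 2; omega, fun _ => ⟨_, hψ, Attacks.imp a b⟩,
            fun hx => Bool.noConfusion hx⟩
          (hOTold _ ?_) (hOAold _ ?_)
        · intro ψ' hs
          injection hs with hs
          rw [← hs]
          exact hta
        · intro _x
          refine ⟨.imp a b, hψ, hψf, ?_⟩
          intro s hd
          cases hd
          exact ⟨b, rfl, hfb⟩
    · -- last P move was an attack on a true formula: O defends
      refine step ⟨.form ψ, false, d.moves.length⟩ rfl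
        ⟨by show d.moves.length < d.moves.length + 1; omega, by show d.moves.length % 2 ≠ (d.moves.length + 1) % 2; omega, fun hx => Bool.noConfusion hx,
          fun _ => ⟨mv, χ, hmv, hia, hχ, hdef⟩⟩
        (hOTold _ ?_) (hOAold _ ?_)
      · intro ψ' hs
        injection hs with hs
        rw [← hs]
        exact hψt
      · intro hx
        exact absurd hx (by simp)

end CLProof
namespace CLProof

theorem valid_taut {φ : Formula} (h : valid rulesetCL φ) : Tautology φ := by
  intro v
  by_contra hv
  have hf : φ.eval v = false := eval_false hv
  refine notWin v ⟨φ, []⟩ h.2 ⟨h.1, ?_, ?_, ?_⟩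
  · intro j ψ hj hs
    exfalso
    unfold Dialogue.stmtAt at hs
    rw [if_neg (by omega)] at hs
    simp at hs
  · intro j mv hj hmv
    exfalso
    unfold Dialogue.moveAt at hmv
    rw [if_neg (by omega)] at hmv
    simp at hmv
  · intro _x
    exact Or.inl ⟨φ, rfl, hf⟩

end CLProof

/-- (Felscher) φ is a classical tautology iff φ is CL-valid. -/
theorem classical_tautology_iff_CL_valid (φ : Formula) :
    Tautology φ ↔ valid rulesetCL φ :=
  ⟨CLProof.taut_valid, CLProof.valid_taut⟩

end LorenzenDialogues
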